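/- arXiv:1103.2513 — 15 statements merged into one kernel-verified Lean document; each statement's English description precedes it below -/
import Mathlib

section
/- Let G be a connected simple graph with n vertices and m edges. Then PI_v(G) ≤ Sz(G) + m, with equality if and only if for every edge e = uv of G one has min(n_u(e), n_v(e)) = 1. -/
/-!
Distance-based topological indices (PI, vertex PI, Szeged, edge Szeged, Zagreb indices,
triangle counts) for finite simple graphs, following Ilić, "Note on PI and Szeged indices".
-/

open scoped Classical
open Finset

namespace PaperDefs

variable {V : Type*} [Fintype V]

/-- `nCloser G u v` is `n_u(e)` for the edge `e = uv`: the number of vertices of `G`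
whose distance to `u` is strictly smaller than their distance to `v`. -/
noncomputable def nCloser (G : SimpleGraph V) (u v : V) : ℕ :=
  (Finset.univ.filter fun w => G.dist w u < G.dist w v).card

/-- The distance `d'(w, e) = min (d w u, d w v)` between a vertex `w` and an edge `e = uv`. -/
noncomputable def vertexEdgeDist (G : SimpleGraph V) (w : V) (e : Sym2 V) : ℕ :=
  Sym2.lift ⟨fun x y => min (G.dist w x) (G.dist w y), fun _ _ => min_comm _ _⟩ e

/-- `mCloser G u v` is `m_u(e)` for the edge `e = uv`: the number of edges of `G`
whose distance to `u` is strictly smaller than their distance to `v`. -/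
noncomputable def mCloser (G : SimpleGraph V) (u v : V) : ℕ :=
  (G.edgeFinset.filter fun f => vertexEdgeDist G u f < vertexEdgeDist G v f).card

/-- The vertex PI index `PI_v(G) = Σ_{e = uv ∈ E} (n_u(e) + n_v(e))`. -/
noncomputable def PIv (G : SimpleGraph V) : ℕ :=
  ∑ e ∈ G.edgeFinset,
    Sym2.lift ⟨fun u v => nCloser G u v + nCloser G v u, fun _ _ => add_comm _ _⟩ e

/-- The Szeged index `Sz(G) = Σ_{e = uv ∈ E} n_u(e) · n_v(e)`. -/
noncomputable def Sz (G : SimpleGraph V) : ℕ :=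
  ∑ e ∈ G.edgeFinset,
    Sym2.lift ⟨fun u v => nCloser G u v * nCloser G v u, fun _ _ => mul_comm _ _⟩ e

/-- The PI index `PI(G) = Σ_{e = uv ∈ E} (m_u(e) + m_v(e))`. -/
noncomputable def PI (G : SimpleGraph V) : ℕ :=
  ∑ e ∈ G.edgeFinset,
    Sym2.lift ⟨fun u v => mCloser G u v + mCloser G v u, fun _ _ => add_comm _ _⟩ e

/-- The edge Szeged index `Sz_e(G) = Σ_{e = uv ∈ E} m_u(e) · m_v(e)`. -/
noncomputable def Sze (G : SimpleGraph V) : ℕ :=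
  ∑ e ∈ G.edgeFinset,
    Sym2.lift ⟨fun u v => mCloser G u v * mCloser G v u, fun _ _ => mul_comm _ _⟩ e

/-- The first Zagreb index `M₁(G) = Σ_{v ∈ V} deg(v)²`. -/
noncomputable def M1 (G : SimpleGraph V) : ℕ :=
  ∑ v : V, G.degree v ^ 2

/-- The second Zagreb index `M₂(G) = Σ_{uv ∈ E} deg(u) · deg(v)`. -/
noncomputable def M2 (G : SimpleGraph V) : ℕ :=
  ∑ e ∈ G.edgeFinset,
    Sym2.lift ⟨fun u v => G.degree u * G.degree v, fun _ _ => mul_comm _ _⟩ e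

/-- `triCount G` is `t(G)`, the number of triangles (subgraphs isomorphic to `K₃`) in `G`. -/
noncomputable def triCount (G : SimpleGraph V) : ℕ :=
  (G.cliqueFinset 3).card

/-- `triEdge G u v` is `t(e)`, the number of triangles containing the edge `e = uv`,
i.e. the number of common neighbors of `u` and `v`. -/
noncomputable def triEdge (G : SimpleGraph V) (u v : V) : ℕ :=
  (Finset.univ.filter fun w => G.Adj u w ∧ G.Adj v w).card

end PaperDefs

open PaperDefs

lemma nCloser_pos {V : Type*} [Fintype V] (G : SimpleGraph V) {u v : V}
    (h : G.Adj u v) : 1 ≤ nCloser G u v := by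
  have : u ∈ Finset.univ.filter fun w => G.dist w u < G.dist w v := by
    have hd : G.dist u v = 1 := SimpleGraph.dist_eq_one_iff_adj.2 h
    simp [SimpleGraph.dist_self, hd]
  exact Finset.card_pos.2 ⟨u, this⟩

lemma key_arith {a b : ℕ} (ha : 1 ≤ a) (hb : 1 ≤ b) :
    a + b ≤ a * b + 1 ∧ (a + b = a * b + 1 ↔ min a b = 1) := by
  obtain ⟨a', rfl⟩ := Nat.exists_eq_add_of_le ha
  obtain ⟨b', rfl⟩ := Nat.exists_eq_add_of_le hb
  constructor
  · nlinarith
  · constructor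
    · intro h
      have : a' * b' = 0 := by nlinarith
      rcases Nat.mul_eq_zero.1 this with h | h <;> omega
    · intro h
      have : a' = 0 ∨ b' = 0 := by omega
      rcases this with rfl | rfl <;> ring

/-- For a connected graph `G` with `m` edges, `PI_v(G) ≤ Sz(G) + m`,
with equality iff `min(n_u(e), n_v(e)) = 1` for every edge `e = uv`. -/
theorem stmt_0 {V : Type*} [Fintype V] (G : SimpleGraph V) (hG : G.Connected) :
    PIv G ≤ Sz G + G.edgeFinset.card ∧
      (PIv G = Sz G + G.edgeFinset.card ↔
        ∀ u v : V, G.Adj u v → min (nCloser G u v) (nCloser G v u) = 1) := by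
  classical
  have hterm : ∀ e ∈ G.edgeFinset,
      Sym2.lift ⟨fun u v => nCloser G u v + nCloser G v u, fun _ _ => add_comm _ _⟩ e ≤
      Sym2.lift ⟨fun u v => nCloser G u v * nCloser G v u, fun _ _ => mul_comm _ _⟩ e + 1 := by
    intro e he
    induction e using Sym2.inductionOn with
    | hf u v =>
      simp only [Sym2.lift_mk]
      have hadj : G.Adj u v := by simpa [SimpleGraph.mem_edgeFinset] using he
      exact (key_arith (nCloser_pos G hadj) (nCloser_pos G hadj.symm)).1
  have hsum : Sz G + G.edgeFinset.card = ∑ e ∈ G.edgeFinset,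
      (Sym2.lift ⟨fun u v => nCloser G u v * nCloser G v u, fun _ _ => mul_comm _ _⟩ e + 1) := by
    rw [Finset.sum_add_distrib, Finset.sum_const, smul_eq_mul, mul_one]; rfl
  have hle : PIv G ≤ Sz G + G.edgeFinset.card := by
    rw [hsum]; exact Finset.sum_le_sum hterm
  refine ⟨hle, ?_⟩
  rw [hsum]
  unfold PIv
  rw [Finset.sum_eq_sum_iff_of_le hterm]
  constructor
  · intro h u v hadj
    have he : s(u, v) ∈ G.edgeFinset := by simpa [SimpleGraph.mem_edgeFinset] using hadj
    have := h _ he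
    simp only [Sym2.lift_mk] at this
    exact (key_arith (nCloser_pos G hadj) (nCloser_pos G hadj.symm)).2.1 this
  · intro h e he
    induction e using Sym2.inductionOn with
    | hf u v =>
      simp only [Sym2.lift_mk]
      have hadj : G.Adj u v := by simpa [SimpleGraph.mem_edgeFinset] using he
      exact (key_arith (nCloser_pos G hadj) (nCloser_pos G hadj.symm)).2.2 (h u v hadj)
end

section
/- Let G be a connected simple graph that contains no induced path P_4 on four vertices and no induced cycle C_4 on four vertices. Then for every edge e = uv of G one has min(n_u(e), n_v(e)) = 1. -/
/-!
Distance-based topological indices (PI, vertex PI, Szeged, edge Szeged, Zagreb indices,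
triangle counts) for finite simple graphs, following Ilić, "Note on PI and Szeged indices".
-/

open scoped Classical
open Finset

open PaperDefs

/-- If some vertex `x ≠ u` is strictly closer to `u` than to `v` (where `uv` is an edge),
then there is a neighbor of `u` that is not adjacent to `v` and different from `v`. -/
lemma exists_private_neighbor {V : Type*} [Fintype V] (G : SimpleGraph V) (hG : G.Connected)
    {u v x : V} (huv : G.Adj u v) (hx : x ≠ u) (h : G.dist x u < G.dist x v) :
    ∃ x', G.Adj u x' ∧ ¬ G.Adj v x' ∧ x' ≠ v := by
  have hpos : 0 < G.dist x u := hG.pos_dist_of_ne hx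
  have hge : G.dist x u + 1 ≤ G.dist x v := h
  rcases eq_or_lt_of_le (show 1 ≤ G.dist x u from hpos) with h1 | h2
  · -- dist x u = 1 : x itself works
    have hadj : G.Adj x u := SimpleGraph.dist_eq_one_iff_adj.mp h1.symm
    refine ⟨x, hadj.symm, ?_, ?_⟩
    · intro hvx
      have : G.dist x v = 1 := SimpleGraph.dist_eq_one_iff_adj.mpr hvx.symm
      omega
    · intro hxv
      subst hxv
      simp [SimpleGraph.dist_self] at hge
  · -- dist x u ≥ 2 : take the neighbor of u on a shortest walk from u to x
    obtain ⟨p, hp⟩ := hG.exists_walk_length_eq_dist u x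
    have hlen : p.length = G.dist x u := by rw [hp, SimpleGraph.dist_comm]
    cases p with
    | nil => simp at hlen h2 <;> omega
    | cons hadj q =>
      rename_i w
      have hq : q.length = G.dist x u - 1 := by
        simp [SimpleGraph.Walk.length_cons] at hlen; omega
      have hwx : G.dist w x ≤ G.dist x u - 1 := by
        rw [← hq]; exact SimpleGraph.dist_le q
      have htri : G.dist x v ≤ G.dist x w + G.dist w v := hG.dist_triangle
      have hxw : G.dist x w = G.dist w x := SimpleGraph.dist_comm
      have hwv : 2 ≤ G.dist w v := by omega
      refine ⟨w, hadj, ?_, ?_⟩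
      · intro hvw
        have : G.dist w v = 1 := SimpleGraph.dist_eq_one_iff_adj.mpr hvw.symm
        omega
      · intro hwv'
        subst hwv'
        simp [SimpleGraph.dist_self] at hwv

/-- A connected graph with no induced `P₄` and no induced `C₄` satisfies
`min(n_u(e), n_v(e)) = 1` for every edge `e = uv`. -/
theorem stmt_1 {V : Type*} [Fintype V] (G : SimpleGraph V) (hG : G.Connected)
    (hP4 : ¬ ∃ a b c d : V, a ≠ c ∧ a ≠ d ∧ b ≠ d ∧
      G.Adj a b ∧ G.Adj b c ∧ G.Adj c d ∧ ¬ G.Adj a c ∧ ¬ G.Adj a d ∧ ¬ G.Adj b d)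
    (hC4 : ¬ ∃ a b c d : V, a ≠ c ∧ b ≠ d ∧
      G.Adj a b ∧ G.Adj b c ∧ G.Adj c d ∧ G.Adj d a ∧ ¬ G.Adj a c ∧ ¬ G.Adj b d) :
    ∀ u v : V, G.Adj u v → min (nCloser G u v) (nCloser G v u) = 1 := by
  intro u v huv
  have hmem_u : u ∈ Finset.univ.filter fun w => G.dist w u < G.dist w v := by
    simp [SimpleGraph.dist_self, hG.pos_dist_of_ne huv.ne]
  have hmem_v : v ∈ Finset.univ.filter fun w => G.dist w v < G.dist w u := by
    simp [SimpleGraph.dist_self, hG.pos_dist_of_ne huv.ne']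
  have h1u : 1 ≤ nCloser G u v := Finset.card_pos.mpr ⟨u, hmem_u⟩
  have h1v : 1 ≤ nCloser G v u := Finset.card_pos.mpr ⟨v, hmem_v⟩
  by_contra hne
  have h2 : 2 ≤ min (nCloser G u v) (nCloser G v u) := by omega
  obtain ⟨x, hxmem, hxne⟩ := Finset.exists_mem_ne
    (show 1 < (Finset.univ.filter fun w => G.dist w u < G.dist w v).card from lt_of_lt_of_le one_lt_two (le_min_iff.mp h2).1) u
  obtain ⟨y, hymem, hyne⟩ := Finset.exists_mem_ne
    (show 1 < (Finset.univ.filter fun w => G.dist w v < G.dist w u).card from lt_of_lt_of_le one_lt_two (le_min_iff.mp h2).2) v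
  simp only [Finset.mem_filter] at hxmem hymem
  obtain ⟨x', hux', hvx', hx'v⟩ := exists_private_neighbor G hG huv hxne hxmem.2
  obtain ⟨y', hvy', huy', hy'u⟩ := exists_private_neighbor G hG huv.symm hyne hymem.2
  have hx'y' : x' ≠ y' := by rintro rfl; exact huy' hux'
  by_cases hxy : G.Adj x' y'
  · exact hC4 ⟨x', u, v, y', hx'v, fun h => hy'u h.symm, hux'.symm, huv, hvy',
      hxy.symm, fun h => hvx' h.symm, huy'⟩
  · exact hP4 ⟨x', u, v, y', hx'v, hx'y', fun h => hy'u h.symm, hux'.symm, huv, hvy',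
      fun h => hvx' h.symm, hxy, huy'⟩
end

section
/- Let G be a connected simple graph on n vertices such that for every edge e = uv of G one has min(n_u(e), n_v(e)) = 1. Then G contains a vertex of degree n − 1. -/
/-!
Distance-based topological indices (PI, vertex PI, Szeged, edge Szeged, Zagreb indices,
triangle counts) for finite simple graphs, following Ilić, "Note on PI and Szeged indices".
-/

open scoped Classical
open Finset

open PaperDefs

/-- A connected graph on `n` vertices in which every edge `e = uv` satisfies
`min(n_u(e), n_v(e)) = 1` contains a vertex of degree `n - 1`. -/
theorem stmt_2 {V : Type*} [Fintype V] (G : SimpleGraph V) (hG : G.Connected)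
    (h : ∀ u v : V, G.Adj u v → min (nCloser G u v) (nCloser G v u) = 1) :
    ∃ v : V, G.degree v = Fintype.card V - 1 := by
  have hV : Nonempty V := hG.nonempty
  obtain ⟨v, -, hv⟩ := Finset.exists_max_image (Finset.univ : Finset V)
    (fun x => G.degree x) ⟨Classical.arbitrary V, Finset.mem_univ _⟩
  refine ⟨v, ?_⟩
  by_contra hdeg
  have hS : ∃ w, ¬ G.Adj v w ∧ w ≠ v := by
    by_contra hc
    push_neg at hc
    apply hdeg
    have hnb : G.neighborFinset v = Finset.univ.erase v := by
      ext z
      simp only [SimpleGraph.mem_neighborFinset, Finset.mem_erase, Finset.mem_univ, and_true]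
      refine ⟨fun hz => (G.ne_of_adj hz).symm, fun hz => ?_⟩
      by_contra hnadj
      exact hz (hc z hnadj)
    rw [← SimpleGraph.card_neighborFinset_eq_degree, hnb, Finset.card_erase_of_mem
      (Finset.mem_univ v), Finset.card_univ]
  set S : Finset V := Finset.univ.filter (fun w => ¬ G.Adj v w ∧ w ≠ v) with hSdef
  have hSne : S.Nonempty := by
    obtain ⟨w, hw1, hw2⟩ := hS
    exact ⟨w, by simp [hSdef, hw1, hw2]⟩
  obtain ⟨w, hwS, hwmin⟩ := Finset.exists_min_image S (fun z => G.dist v z) hSne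
  have hwv : ¬ G.Adj v w ∧ w ≠ v := by simpa [hSdef] using hwS
  have hdpos : 0 < G.dist v w := hG.pos_dist_of_ne (Ne.symm hwv.2)
  have hd2 : 2 ≤ G.dist v w := by
    by_contra hlt
    push_neg at hlt
    have h1 : G.dist v w = 1 := by omega
    exact hwv.1 (SimpleGraph.dist_eq_one_iff_adj.mp h1)
  -- extract a neighbor x of w strictly closer to v
  have hdwv : G.dist w v ≠ 0 := by rw [SimpleGraph.dist_comm]; omega
  obtain ⟨p, hp⟩ := SimpleGraph.exists_walk_of_dist_ne_zero hdwv
  obtain ⟨x, hwx, q, hq⟩ : ∃ x, G.Adj w x ∧ ∃ q : G.Walk x v, q.length + 1 = G.dist w v := by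
    cases p with
    | nil => exact absurd rfl hwv.2
    | cons hadj q => exact ⟨_, hadj, q, by simpa using hp⟩
  have hdvx : G.dist v x < G.dist v w := by
    have h1 : G.dist v x ≤ q.length := by
      have := SimpleGraph.dist_le q.reverse
      simpa [SimpleGraph.dist_comm] using this
    have : G.dist w v = G.dist v w := SimpleGraph.dist_comm
    omega
  have hxv : x ≠ v := by rintro rfl; exact hwv.1 hwx.symm
  have hvx : G.Adj v x := by
    by_contra hnadj
    have hxS : x ∈ S := by simp [hSdef, hnadj, hxv]
    exact absurd (hwmin x hxS) (by omega)
  have hwx' : w ≠ x := G.ne_of_adj hwx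
  have hmin := h v x hvx
  rcases min_eq_iff.mp hmin with ⟨h1, -⟩ | ⟨h1, -⟩
  · -- nCloser G v x = 1 : the only vertex closer to v than to x is v itself
    have hvmem : v ∈ Finset.univ.filter (fun z => G.dist z v < G.dist z x) := by
      simp only [Finset.mem_filter, Finset.mem_univ, true_and]
      rw [SimpleGraph.dist_self]
      exact hG.pos_dist_of_ne hxv.symm
    have honly : ∀ z, G.dist z v < G.dist z x → z = v := by
      intro z hz
      obtain ⟨a, ha⟩ := Finset.card_eq_one.mp h1
      have hz' : z ∈ Finset.univ.filter (fun z => G.dist z v < G.dist z x) := by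
        simp [hz]
      rw [ha, Finset.mem_singleton] at hz' hvmem
      rw [hz', hvmem]
    -- every neighbor of v other than x is a neighbor of x
    have hkey : ∀ z, G.Adj v z → z ≠ x → G.Adj x z := by
      intro z hz hzx
      have hd1 : G.dist z v = 1 := SimpleGraph.dist_eq_one_iff_adj.mpr hz.symm
      have hle : G.dist z x ≤ 1 := by
        by_contra hgt
        have := honly z (by omega)
        exact (G.ne_of_adj hz) this.symm
      have hne0 : G.dist z x ≠ 0 := fun h0 => hzx (hG.dist_eq_zero_iff.mp h0)
      have : G.dist z x = 1 := by omega
      exact (SimpleGraph.dist_eq_one_iff_adj.mp this).symm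
    -- build an injection showing degree x > degree v
    set f : V → V := fun z => if z = x then v else z with hf
    have himg : (G.neighborFinset v).image f ⊆ G.neighborFinset x := by
      intro y hy
      obtain ⟨z, hz, rfl⟩ := Finset.mem_image.mp hy
      rw [SimpleGraph.mem_neighborFinset] at hz ⊢
      by_cases hzx : z = x
      · simp [hf, hzx]; exact hvx.symm
      · simpa [hf, hzx] using hkey z hz hzx
    have hinj : Set.InjOn f (G.neighborFinset v) := by
      intro a ha b hb hab
      rw [Finset.mem_coe, SimpleGraph.mem_neighborFinset] at ha hb
      simp only [hf] at hab
      split_ifs at hab with hax hbx hbx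
      · rw [hax, hbx]
      · exact absurd hab.symm (G.ne_of_adj hb).symm
      · exact absurd hab (G.ne_of_adj ha).symm
      · exact hab
    have hwmem : w ∈ G.neighborFinset x := by
      rw [SimpleGraph.mem_neighborFinset]; exact hwx.symm
    have hwnotimg : w ∉ (G.neighborFinset v).image f := by
      intro hw
      obtain ⟨z, hz, hzw⟩ := Finset.mem_image.mp hw
      rw [SimpleGraph.mem_neighborFinset] at hz
      by_cases hzx : z = x
      · simp only [hf, hzx, if_pos] at hzw
        exact hwv.2 hzw.symm
      · simp only [hf, hzx, if_neg, not_false_iff] at hzw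
        exact hwv.1 (hzw ▸ hz)
    have hcard : G.degree v + 1 ≤ G.degree x := by
      have h1 : insert w ((G.neighborFinset v).image f) ⊆ G.neighborFinset x :=
        Finset.insert_subset hwmem himg
      have h2 := Finset.card_le_card h1
      rw [Finset.card_insert_of_notMem hwnotimg, Finset.card_image_of_injOn hinj] at h2
      simpa [SimpleGraph.card_neighborFinset_eq_degree] using h2
    have := hv x (Finset.mem_univ x)
    omega
  · -- nCloser G x v = 1 : but both x and w are closer to x than to v
    have hxmem : x ∈ Finset.univ.filter (fun z => G.dist z x < G.dist z v) := by
      simp only [Finset.mem_filter, Finset.mem_univ, true_and]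
      rw [SimpleGraph.dist_self]
      exact hG.pos_dist_of_ne hxv
    have hwmem : w ∈ Finset.univ.filter (fun z => G.dist z x < G.dist z v) := by
      simp only [Finset.mem_filter, Finset.mem_univ, true_and]
      have h1 : G.dist w x = 1 := SimpleGraph.dist_eq_one_iff_adj.mpr hwx
      have h2 : G.dist w v = G.dist v w := SimpleGraph.dist_comm
      omega
    have : 2 ≤ nCloser G x v := by
      rw [nCloser]
      have : ({x, w} : Finset V) ⊆ Finset.univ.filter (fun z => G.dist z x < G.dist z v) := by
        intro z hz
        rcases Finset.mem_insert.mp hz with rfl | hz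
        · exact hxmem
        · rw [Finset.mem_singleton] at hz; exact hz ▸ hwmem
      have hc := Finset.card_le_card this
      rwa [Finset.card_pair (Ne.symm hwx')] at hc
    omega
end

section
/- Let G be a connected simple graph with n vertices, m edges, and minimum vertex degree δ(G) ≥ 2. Then PI(G) ≤ Sz_e(G) + m, with equality if and only if for every edge e = uv of G one has min(m_u(e), m_v(e)) = 1. -/
/-!
Distance-based topological indices (PI, vertex PI, Szeged, edge Szeged, Zagreb indices,
triangle counts) for finite simple graphs, following Ilić, "Note on PI and Szeged indices".
-/

open scoped Classical
open Finset

open PaperDefs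

section AuxLemmas

lemma key_le (a b : ℕ) (ha : 1 ≤ a) (hb : 1 ≤ b) : a + b ≤ a * b + 1 := by
  obtain ⟨a', rfl⟩ := Nat.exists_eq_add_of_le ha
  obtain ⟨b', rfl⟩ := Nat.exists_eq_add_of_le hb
  have : (1 + a') * (1 + b') = a' * b' + a' + b' + 1 := by ring
  rw [this]
  set c := a' * b'
  omega

lemma key_eq (a b : ℕ) (ha : 1 ≤ a) (hb : 1 ≤ b) :
    a + b = a * b + 1 ↔ min a b = 1 := by
  obtain ⟨a', rfl⟩ := Nat.exists_eq_add_of_le ha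
  obtain ⟨b', rfl⟩ := Nat.exists_eq_add_of_le hb
  have h : (1 + a') * (1 + b') = a' * b' + a' + b' + 1 := by ring
  rw [h]
  have h2 : a' * b' = 0 ↔ a' = 0 ∨ b' = 0 := Nat.mul_eq_zero
  set c := a' * b'
  omega

lemma mCloser_pos {V : Type*} [Fintype V] (G : SimpleGraph V) (hG : G.Connected)
    (hδ : 2 ≤ G.minDegree) {u v : V} (huv : G.Adj u v) : 1 ≤ mCloser G u v := by
  have hdeg : 2 ≤ G.degree u := le_trans hδ (G.minDegree_le_degree u)
  have : ∃ w ∈ G.neighborFinset u, w ≠ v := by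
    by_contra h
    push_neg at h
    have hsub : G.neighborFinset u ⊆ {v} := fun w hw => Finset.mem_singleton.mpr (h w hw)
    have := Finset.card_le_card hsub
    rw [← SimpleGraph.card_neighborFinset_eq_degree] at hdeg
    simp only [Finset.card_singleton] at this
    omega
  obtain ⟨w, hw, hwv⟩ := this
  rw [SimpleGraph.mem_neighborFinset] at hw
  rw [mCloser, Finset.one_le_card]
  refine ⟨s(u, w), Finset.mem_filter.mpr ⟨SimpleGraph.mem_edgeFinset.mpr hw, ?_⟩⟩
  have h1 : vertexEdgeDist G u s(u, w) = 0 := by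
    simp [vertexEdgeDist, SimpleGraph.dist_self]
  have h2 : 0 < vertexEdgeDist G v s(u, w) := by
    simp only [vertexEdgeDist, Sym2.lift_mk, lt_min_iff]
    exact ⟨hG.pos_dist_of_ne (G.ne_of_adj huv).symm,
      hG.pos_dist_of_ne (Ne.symm hwv)⟩
  omega

end AuxLemmas


/-- For a connected graph `G` with `m` edges and minimum degree `δ(G) ≥ 2`,
`PI(G) ≤ Sz_e(G) + m`, with equality iff `min(m_u(e), m_v(e)) = 1` for every edge `e = uv`. -/
theorem stmt_3 {V : Type*} [Fintype V] (G : SimpleGraph V) (hG : G.Connected)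
    (hδ : 2 ≤ G.minDegree) :
    PI G ≤ Sze G + G.edgeFinset.card ∧
      (PI G = Sze G + G.edgeFinset.card ↔
        ∀ u v : V, G.Adj u v → min (mCloser G u v) (mCloser G v u) = 1) := by
  have hterm : ∀ e ∈ G.edgeFinset,
      Sym2.lift ⟨fun u v => mCloser G u v + mCloser G v u, fun _ _ => add_comm _ _⟩ e
        ≤ Sym2.lift ⟨fun u v => mCloser G u v * mCloser G v u, fun _ _ => mul_comm _ _⟩ e
          + 1 := by
    intro e
    induction e using Sym2.ind with
    | _ u v =>
      intro he
      have hadj : G.Adj u v := SimpleGraph.mem_edgeFinset.mp he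
      simp only [Sym2.lift_mk]
      exact key_le _ _ (mCloser_pos G hG hδ hadj) (mCloser_pos G hG hδ hadj.symm)
  have hsum : Sze G + G.edgeFinset.card =
      ∑ e ∈ G.edgeFinset,
        (Sym2.lift ⟨fun u v => mCloser G u v * mCloser G v u, fun _ _ => mul_comm _ _⟩ e
          + 1) := by
    rw [Finset.sum_add_distrib, Finset.sum_const, smul_eq_mul, mul_one]
    rfl
  constructor
  · rw [hsum, PI]
    exact Finset.sum_le_sum hterm
  · rw [hsum, PI]
    rw [Finset.sum_eq_sum_iff_of_le hterm]
    constructor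
    · intro h u v hadj
      have := h s(u, v) (SimpleGraph.mem_edgeFinset.mpr hadj)
      simp only [Sym2.lift_mk] at this
      exact (key_eq _ _ (mCloser_pos G hG hδ hadj) (mCloser_pos G hG hδ hadj.symm)).mp this
    · intro h e
      induction e using Sym2.ind with
      | _ u v =>
        intro he
        have hadj : G.Adj u v := SimpleGraph.mem_edgeFinset.mp he
        simp only [Sym2.lift_mk]
        exact (key_eq _ _ (mCloser_pos G hG hδ hadj)
          (mCloser_pos G hG hδ hadj.symm)).mpr (h u v hadj)
end

section
/- Let G be a connected simple graph such that for every edge e = uv of G one has min(m_u(e), m_v(e)) = 1, and let v be a branching vertex of G (i.e. deg(v) > 2). Then every neighbor of v has degree exactly 2. -/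
/-!
Distance-based topological indices (PI, vertex PI, Szeged, edge Szeged, Zagreb indices,
triangle counts) for finite simple graphs, following Ilić, "Note on PI and Szeged indices".
-/

open scoped Classical
open Finset

open PaperDefs

namespace PaperDefs

variable {V : Type*} [Fintype V]

lemma vED_mk (G : SimpleGraph V) (w x y : V) :
    vertexEdgeDist G w s(x, y) = min (G.dist w x) (G.dist w y) := rfl

lemma nbr_singleton (G : SimpleGraph V) {u v : V} (huv : G.Adj u v)
    (hdeg : G.degree u = 1) : G.neighborFinset u = {v} := by
  apply Finset.eq_singleton_iff_unique_mem.mpr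
  refine ⟨by simpa using huv, fun z hz => ?_⟩
  by_contra hne
  have hsub : ({v, z} : Finset V) ⊆ G.neighborFinset u := by
    intro a ha
    simp only [Finset.mem_insert, Finset.mem_singleton] at ha
    rcases ha with rfl | rfl
    · simpa using huv
    · exact hz
  have := Finset.card_le_card hsub
  rw [Finset.card_pair (Ne.symm hne),
    SimpleGraph.card_neighborFinset_eq_degree, hdeg] at this
  omega

lemma mCloser_ge (G : SimpleGraph V) (hG : G.Connected) {u v : V} (huv : G.Adj u v) :
    G.degree u ≤ mCloser G u v + 1 := by
  classical
  have key : ((G.neighborFinset u).erase v).card ≤ mCloser G u v := by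
    apply Finset.card_le_card_of_injOn (fun w => s(u, w))
    · intro w hw
      rw [Finset.mem_coe, Finset.mem_erase, SimpleGraph.mem_neighborFinset] at hw
      obtain ⟨hwv, haw⟩ := hw
      simp only [mCloser, Finset.mem_coe, Finset.mem_filter, SimpleGraph.mem_edgeFinset]
      refine ⟨haw, ?_⟩
      rw [vED_mk, vED_mk, SimpleGraph.dist_self]
      have h1 : 0 < G.dist v u := hG.pos_dist_of_ne (huv.symm.ne)
      have h2 : 0 < G.dist v w := hG.pos_dist_of_ne (Ne.symm hwv)
      simp [lt_min h1 h2]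
    · intro a _ b _ hab
      simp only [Sym2.eq, Sym2.rel_iff', Prod.mk.injEq, Prod.swap_prod_mk] at hab
      rcases hab with ⟨_, h⟩ | ⟨h1, h2⟩
      · exact h
      · exact h2.trans h1
  have : ((G.neighborFinset u).erase v).card = G.degree u - 1 := by
    rw [Finset.card_erase_of_mem (by simpa using huv), SimpleGraph.card_neighborFinset_eq_degree]
  omega

lemma dist_succ_of_deg_one (G : SimpleGraph V) (hG : G.Connected) {u v : V}
    (huv : G.Adj u v) (hdeg : G.degree u = 1) {x : V} (hx : x ≠ u) :
    G.dist v x + 1 ≤ G.dist u x := by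
  obtain ⟨p, hp⟩ := hG.exists_walk_length_eq_dist u x
  cases p with
  | nil => exact absurd rfl hx.symm
  | cons h q =>
    rename_i w
    have hw : w = v := by
      have : w ∈ G.neighborFinset u := by simpa using h
      rw [nbr_singleton G huv hdeg] at this
      simpa using this
    subst hw
    have := SimpleGraph.dist_le q
    simp only [SimpleGraph.Walk.length_cons] at hp
    omega

lemma mCloser_deg_one (G : SimpleGraph V) (hG : G.Connected) {u v : V}
    (huv : G.Adj u v) (hdeg : G.degree u = 1) : mCloser G u v = 0 := by
  rw [mCloser, Finset.card_eq_zero, Finset.filter_eq_empty_iff]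
  intro f hf
  rw [SimpleGraph.mem_edgeFinset] at hf
  induction f with
  | _ x y =>
    rw [vED_mk, vED_mk]
    have duv : G.dist u v = 1 := SimpleGraph.dist_eq_one_iff_adj.mpr huv
    have dvu : G.dist v u = 1 := SimpleGraph.dist_eq_one_iff_adj.mpr huv.symm
    by_cases hxu : x = u
    · subst hxu
      have : y = v := by
        have : y ∈ G.neighborFinset x := by simpa using hf
        rw [nbr_singleton G huv hdeg] at this
        simpa using this
      subst this
      simp [SimpleGraph.dist_self, duv, dvu]
    · by_cases hyu : y = u
      · subst hyu
        have : x = v := by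
          have : x ∈ G.neighborFinset y := by simpa using hf.symm
          rw [nbr_singleton G huv hdeg] at this
          simpa using this
        subst this
        simp [SimpleGraph.dist_self, duv, dvu]
      · have h1 := dist_succ_of_deg_one G hG huv hdeg hxu
        have h2 := dist_succ_of_deg_one G hG huv hdeg hyu
        omega

end PaperDefs

/-- In a connected graph in which every edge `e = uv` satisfies
`min(m_u(e), m_v(e)) = 1`, every neighbor of a branching vertex (degree `> 2`) has degree `2`. -/
theorem stmt_6 {V : Type*} [Fintype V] (G : SimpleGraph V) (hG : G.Connected)
    (h : ∀ u v : V, G.Adj u v → min (mCloser G u v) (mCloser G v u) = 1)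
    (v : V) (hv : 2 < G.degree v) :
    ∀ u : V, G.Adj v u → G.degree u = 2 := by
  intro u hvu
  have hmin := h v u hvu
  have hmv := mCloser_ge G hG hvu
  have hmu := mCloser_ge G hG hvu.symm
  have hmu1 : mCloser G u v = 1 := by omega
  have hdne1 : G.degree u ≠ 1 := by
    intro hd
    rw [mCloser_deg_one G hG hvu.symm hd] at hmu1
    exact absurd hmu1 (by omega)
  have hdpos : 0 < G.degree u := by
    rw [← SimpleGraph.card_neighborFinset_eq_degree]
    exact Finset.card_pos.mpr ⟨v, by simpa using hvu.symm⟩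
  omega
end

section
/- Let G be a connected simple graph such that for every edge e = uv of G one has min(m_u(e), m_v(e)) = 1. If G contains at least two branching vertices, then G contains exactly two branching vertices and the distance between any two branching vertices of G equals 2. -/
/-!
Distance-based topological indices (PI, vertex PI, Szeged, edge Szeged, Zagreb indices,
triangle counts) for finite simple graphs, following Ilić, "Note on PI and Szeged indices".
-/

open scoped Classical
open Finset

open PaperDefs

set_option linter.unusedSectionVars false

namespace Stmt7Aux
variable {V : Type*} [Fintype V] {G : SimpleGraph V}

lemma ved_mk (G : SimpleGraph V) (w x y : V) :
    vertexEdgeDist G w s(x, y) = min (G.dist w x) (G.dist w y) := rfl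

lemma getVert_dist_le (hG : G.Connected) {a b : V} (p : G.Walk a b) :
    ∀ i j : ℕ, i ≤ j → G.dist (p.getVert i) (p.getVert j) ≤ j - i := by
  induction p with
  | nil => intro i j _; simp [SimpleGraph.Walk.getVert, SimpleGraph.dist_self]
  | @cons a c b h q ih =>
    intro i j hij
    cases i with
    | zero =>
      cases j with
      | zero => simp
      | succ j =>
        simp only [SimpleGraph.Walk.getVert_zero, SimpleGraph.Walk.getVert_cons_succ]
        calc G.dist a (q.getVert j) ≤ G.dist a c + G.dist c (q.getVert j) :=
              hG.dist_triangle
          _ ≤ 1 + (j - 0) := by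
              gcongr
              · exact SimpleGraph.dist_eq_one_iff_adj.mpr h |>.le
              · simpa using ih 0 j (Nat.zero_le _)
          _ ≤ j + 1 - 0 := by omega
    | succ i =>
      cases j with
      | zero => omega
      | succ j =>
        simp only [SimpleGraph.Walk.getVert_cons_succ]
        simpa using ih i j (by omega)

lemma mCloser_lb (hG : G.Connected) {u v : V} (huv : G.Adj u v) :
    G.degree u - 1 ≤ mCloser G u v := by
  classical
  have hsub : (G.incidenceFinset u).erase s(u, v) ⊆
      G.edgeFinset.filter fun f => vertexEdgeDist G u f < vertexEdgeDist G v f := by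
    intro f hf
    rw [Finset.mem_erase] at hf
    obtain ⟨hne, hf⟩ := hf
    rw [SimpleGraph.mem_incidenceFinset] at hf
    obtain ⟨hfe, hu⟩ := hf
    rw [Finset.mem_filter]
    refine ⟨by rwa [SimpleGraph.mem_edgeFinset], ?_⟩
    induction f using Sym2.ind with
    | _ x y =>
      rcases Sym2.mem_iff.mp hu with h' | h'
      · subst h'
        have hyv : y ≠ v := by rintro rfl; exact hne rfl
        rw [ved_mk, ved_mk, SimpleGraph.dist_self]
        have h1 : G.dist v u = 1 := SimpleGraph.dist_eq_one_iff_adj.mpr huv.symm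
        have h2 : 0 < G.dist v y := hG.pos_dist_of_ne (fun e => hyv e.symm)
        omega
      · subst h'
        have hxv : x ≠ v := by
          rintro rfl; exact hne (Sym2.eq_swap)
        rw [ved_mk, ved_mk, SimpleGraph.dist_self]
        have h1 : G.dist v u = 1 := SimpleGraph.dist_eq_one_iff_adj.mpr huv.symm
        have h2 : 0 < G.dist v x := hG.pos_dist_of_ne (fun e => hxv e.symm)
        omega
  have hcard := Finset.card_le_card hsub
  rw [Finset.card_erase_of_mem (by
    rw [SimpleGraph.mem_incidenceFinset]
    exact ⟨huv, Sym2.mem_mk_left u v⟩), SimpleGraph.card_incidenceFinset_eq_degree] at hcard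
  exact hcard.trans_eq rfl

lemma mCloser_two_le {x u : V} {f1 f2 : Sym2 V} (hf1 : f1 ∈ G.edgeFinset)
    (hf2 : f2 ∈ G.edgeFinset) (hne : f1 ≠ f2)
    (h1 : vertexEdgeDist G x f1 < vertexEdgeDist G u f1)
    (h2 : vertexEdgeDist G x f2 < vertexEdgeDist G u f2) :
    2 ≤ mCloser G x u := by
  have : 1 < (G.edgeFinset.filter fun f =>
      vertexEdgeDist G x f < vertexEdgeDist G u f).card := by
    rw [Finset.one_lt_card_iff]
    exact ⟨f1, f2, Finset.mem_filter.mpr ⟨hf1, h1⟩, Finset.mem_filter.mpr ⟨hf2, h2⟩, hne⟩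
  exact this

end Stmt7Aux

namespace Stmt7Aux
variable {V : Type*} [Fintype V] {G : SimpleGraph V}

lemma deg_le (hG : G.Connected)
    (h : ∀ u v : V, G.Adj u v → min (mCloser G u v) (mCloser G v u) = 1)
    {u v : V} (huv : G.Adj u v) (hu : 2 < G.degree u) : G.degree v ≤ 2 := by
  have h1 := mCloser_lb hG huv
  have h2 := mCloser_lb hG huv.symm
  have h3 := h u v huv
  omega

lemma dist_two (hG : G.Connected)
    (h : ∀ u v : V, G.Adj u v → min (mCloser G u v) (mCloser G v u) = 1)
    {u v : V} (hu : 2 < G.degree u) (hv : 2 < G.degree v) (huv : u ≠ v) :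
    G.dist u v = 2 := by
  have hk0 : 0 < G.dist u v := hG.pos_dist_of_ne huv
  have hk1 : G.dist u v ≠ 1 := by
    intro h1
    have hadj : G.Adj u v := SimpleGraph.dist_eq_one_iff_adj.mp h1
    have := deg_le hG h hadj hu
    omega
  by_contra hne2
  have hk3 : 3 ≤ G.dist u v := by omega
  set k := G.dist u v with hk
  obtain ⟨p, hp⟩ := hG.exists_walk_length_eq_dist u v
  have hLen : p.length = k := hp
  have h0 : p.getVert 0 = u := p.getVert_zero
  have hkk : p.getVert k = v := by rw [← hLen]; exact p.getVert_length
  set x1 := p.getVert 1 with hx1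
  set x2 := p.getVert 2 with hx2
  set y := p.getVert (k - 1) with hy
  have a01 : G.Adj u x1 := by
    have := p.adj_getVert_succ (i := 0) (by omega)
    rwa [h0] at this
  have a12 : G.Adj x1 x2 := p.adj_getVert_succ (by omega)
  have ayv : G.Adj y v := by
    have := p.adj_getVert_succ (i := k - 1) (by omega)
    rw [show k - 1 + 1 = k by omega, hkk] at this
    exact this
  have d_u_x1 : G.dist u x1 = 1 := SimpleGraph.dist_eq_one_iff_adj.mpr a01
  have d_x2_v : G.dist x2 v ≤ k - 2 := by
    have := getVert_dist_le hG p 2 k (by omega)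
    rwa [hkk] at this
  have d_u_x2 : 2 ≤ G.dist u x2 := by
    have ht := hG.dist_triangle (u := u) (v := x2) (w := v)
    omega
  have d_u_y_le : G.dist u y ≤ k - 1 := by
    have := getVert_dist_le hG p 0 (k - 1) (by omega)
    rwa [h0] at this
  have d_y_v : G.dist y v = 1 := SimpleGraph.dist_eq_one_iff_adj.mpr ayv
  have d_u_y_ge : k - 1 ≤ G.dist u y := by
    have ht := hG.dist_triangle (u := u) (v := y) (w := v)
    omega
  have d_x1_y : G.dist x1 y ≤ k - 2 := getVert_dist_le hG p 1 (k - 1) (by omega)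
  have he1 : s(x1, x2) ∈ G.edgeFinset := by rw [SimpleGraph.mem_edgeFinset]; exact a12
  have he2 : s(y, v) ∈ G.edgeFinset := by rw [SimpleGraph.mem_edgeFinset]; exact ayv
  have hne12 : s(x1, x2) ≠ s(y, v) := by
    intro heq
    rw [Sym2.eq_iff] at heq
    rcases heq with ⟨h1, _⟩ | ⟨h1, _⟩
    · have : G.dist u x1 = G.dist u y := by rw [h1]
      omega
    · have : G.dist u x1 = G.dist u v := by rw [h1]
      omega
  have c1 : vertexEdgeDist G x1 s(x1, x2) < vertexEdgeDist G u s(x1, x2) := by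
    rw [ved_mk, ved_mk, SimpleGraph.dist_self]
    omega
  have c2 : vertexEdgeDist G x1 s(y, v) < vertexEdgeDist G u s(y, v) := by
    rw [ved_mk, ved_mk]
    omega
  have hm1 : 2 ≤ mCloser G x1 u := mCloser_two_le he1 he2 hne12 c1 c2
  have hm2 : 2 ≤ mCloser G u x1 := by
    have := mCloser_lb hG a01
    omega
  have := h u x1 a01
  omega

lemma nbr_adj (hG : G.Connected)
    (h : ∀ u v : V, G.Adj u v → min (mCloser G u v) (mCloser G v u) = 1)
    {a w : V} (ha : 2 < G.degree a)
    (hdist : G.dist a w = 2) : ∀ z, G.Adj w z → G.Adj a z := by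
  obtain ⟨p, hp⟩ := hG.exists_walk_length_eq_dist a w
  have hlen : p.length = 2 := by rw [hp, hdist]
  set y := p.getVert 1 with hy
  have hay : G.Adj a y := by
    have := p.adj_getVert_succ (i := 0) (by omega)
    rwa [p.getVert_zero] at this
  have hyw : G.Adj y w := by
    have := p.adj_getVert_succ (i := 1) (by omega)
    rw [show (1 : ℕ) + 1 = p.length from by omega] at this
    rwa [p.getVert_length] at this
  have day : G.dist a y = 1 := SimpleGraph.dist_eq_one_iff_adj.mpr hay
  have dyw : G.dist y w = 1 := SimpleGraph.dist_eq_one_iff_adj.mpr hyw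
  intro z hz
  have hza : z ≠ a := by
    intro hzeq
    have haw : G.Adj a w := hzeq ▸ hz.symm
    have := SimpleGraph.dist_eq_one_iff_adj.mpr haw
    omega
  by_contra hnadj
  have hz2 : 2 ≤ G.dist a z := by
    have h0 : G.dist a z ≠ 1 := fun e => hnadj (SimpleGraph.dist_eq_one_iff_adj.mp e)
    have hpos : 0 < G.dist a z := hG.pos_dist_of_ne (Ne.symm hza)
    omega
  have hyz : y ≠ z := by
    rintro rfl
    omega
  have he1 : s(y, w) ∈ G.edgeFinset := by rw [SimpleGraph.mem_edgeFinset]; exact hyw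
  have he2 : s(w, z) ∈ G.edgeFinset := by rw [SimpleGraph.mem_edgeFinset]; exact hz
  have hne : s(y, w) ≠ s(w, z) := by
    intro heq
    rw [Sym2.eq_iff] at heq
    rcases heq with ⟨h1, _⟩ | ⟨h1, h2⟩
    · have : G.dist a y = G.dist a w := by rw [h1]
      omega
    · exact hyz h1
  have c1 : vertexEdgeDist G y s(y, w) < vertexEdgeDist G a s(y, w) := by
    rw [ved_mk, ved_mk, SimpleGraph.dist_self]
    omega
  have c2 : vertexEdgeDist G y s(w, z) < vertexEdgeDist G a s(w, z) := by
    rw [ved_mk, ved_mk]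
    omega
  have hm1 : 2 ≤ mCloser G y a := mCloser_two_le he1 he2 hne c1 c2
  have hm2 : 2 ≤ mCloser G a y := by
    have := mCloser_lb hG hay
    omega
  have := h a y hay
  omega

lemma no_three (hG : G.Connected)
    (h : ∀ u v : V, G.Adj u v → min (mCloser G u v) (mCloser G v u) = 1)
    {u v w : V} (hu : 2 < G.degree u) (hv : 2 < G.degree v) (hw : 2 < G.degree w)
    (huv : u ≠ v) (huw : u ≠ w) (hvw : v ≠ w) : False := by
  have duw : G.dist u w = 2 := dist_two hG h hu hw huw
  have dvw : G.dist v w = 2 := dist_two hG h hv hw hvw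
  obtain ⟨z, hz⟩ := (SimpleGraph.degree_pos_iff_exists_adj (G := G) (v := w)).mp (by omega : 0 < G.degree w)
  have hzu : G.Adj u z := nbr_adj hG h hu duw z hz
  have hzv : G.Adj v z := nbr_adj hG h hv dvw z hz
  have hsub : ({u, v, w} : Finset V) ⊆ G.neighborFinset z := by
    intro t ht
    rw [SimpleGraph.mem_neighborFinset]
    simp only [Finset.mem_insert, Finset.mem_singleton] at ht
    rcases ht with rfl | rfl | rfl
    · exact hzu.symm
    · exact hzv.symm
    · exact hz.symm
  have hcard : 3 ≤ G.degree z := by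
    have := Finset.card_le_card hsub
    rw [SimpleGraph.card_neighborFinset_eq_degree] at this
    have h3 : ({u, v, w} : Finset V).card = 3 := by
      rw [Finset.card_insert_of_notMem (by simp [huv, huw]),
        Finset.card_insert_of_notMem (by simp [hvw]), Finset.card_singleton]
    omega
  have := deg_le hG h hz hw
  omega

end Stmt7Aux


/-- If a connected graph in which every edge `e = uv` satisfies
`min(m_u(e), m_v(e)) = 1` has at least two branching vertices (degree `> 2`), then it has
exactly two of them and any two distinct branching vertices are at distance `2`. -/
theorem stmt_7 {V : Type*} [Fintype V] (G : SimpleGraph V) (hG : G.Connected)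
    (h : ∀ u v : V, G.Adj u v → min (mCloser G u v) (mCloser G v u) = 1)
    (hbr : ∃ u v : V, u ≠ v ∧ 2 < G.degree u ∧ 2 < G.degree v) :
    (Finset.univ.filter fun w : V => 2 < G.degree w).card = 2 ∧
      ∀ u v : V, 2 < G.degree u → 2 < G.degree v → u ≠ v → G.dist u v = 2 := by
  obtain ⟨u, v, huv, hu, hv⟩ := hbr
  have hcard2 : (Finset.univ.filter fun w : V => 2 < G.degree w).card = 2 := by
    have hge : 1 < (Finset.univ.filter fun w : V => 2 < G.degree w).card :=
      Finset.one_lt_card_iff.mpr ⟨u, v, by simp [hu], by simp [hv], huv⟩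
    have hle : ¬ 2 < (Finset.univ.filter fun w : V => 2 < G.degree w).card := by
      intro hlt
      obtain ⟨a, b, c, ha, hb, hc, hab, hac, hbc⟩ := Finset.two_lt_card_iff.mp hlt
      simp only [Finset.mem_filter, Finset.mem_univ, true_and] at ha hb hc
      exact Stmt7Aux.no_three hG h ha hb hc hab hac hbc
    omega
  exact ⟨hcard2, fun a b ha hb hab => Stmt7Aux.dist_two hG h ha hb hab⟩
end

section
/- Let G be a connected simple graph with diameter 2. Then PI_v(G) = M_1(G) − 6·t(G). -/
/-!
Distance-based topological indices (PI, vertex PI, Szeged, edge Szeged, Zagreb indices,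
triangle counts) for finite simple graphs, following Ilić, "Note on PI and Szeged indices".
-/

open scoped Classical
open Finset

open PaperDefs

section Aux

variable {V : Type*} [Fintype V]

lemma sum_dart_edge (G : SimpleGraph V) [DecidableRel G.Adj] (f : Sym2 V → ℕ) :
    ∑ d : G.Dart, f d.edge = 2 * ∑ e ∈ G.edgeFinset, f e := by
  classical
  rw [← Finset.sum_fiberwise_of_maps_to (g := SimpleGraph.Dart.edge) (t := G.edgeFinset)
    (fun d _ => by simp [SimpleGraph.Dart.edge_mem]) (fun d => f d.edge)]
  rw [Finset.mul_sum]
  refine Finset.sum_congr rfl fun e he => ?_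
  have h1 : ∀ d ∈ Finset.univ.filter (fun d : G.Dart => d.edge = e), f d.edge = f e := by
    intro d hd
    simp only [Finset.mem_filter] at hd
    rw [hd.2]
  rw [Finset.sum_congr rfl h1, Finset.sum_const, smul_eq_mul]
  congr 1
  exact G.dart_edge_fiber_card e (by rwa [← SimpleGraph.mem_edgeFinset])

lemma sum_dart_fst_deg (G : SimpleGraph V) [DecidableRel G.Adj] :
    ∑ d : G.Dart, G.degree d.fst = ∑ v : V, G.degree v ^ 2 := by
  classical
  rw [← Finset.sum_fiberwise_of_maps_to (g := fun d : G.Dart => d.fst) (t := Finset.univ)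
    (fun d _ => Finset.mem_univ _) (fun d => G.degree d.fst)]
  refine Finset.sum_congr rfl fun v _ => ?_
  have h1 : ∀ d ∈ Finset.univ.filter (fun d : G.Dart => d.fst = v),
      G.degree d.fst = G.degree v := by
    intro d hd
    simp only [Finset.mem_filter] at hd
    rw [hd.2]
  rw [Finset.sum_congr rfl h1, Finset.sum_const, smul_eq_mul, sq]
  congr 1
  exact G.dart_fst_fiber_card_eq_degree v

lemma sum_dart_symm (G : SimpleGraph V) [DecidableRel G.Adj] (g : V → V → ℕ) :
    ∑ d : G.Dart, g d.fst d.snd = ∑ d : G.Dart, g d.snd d.fst := by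
  classical
  exact Fintype.sum_bijective SimpleGraph.Dart.symm
    (SimpleGraph.Dart.symm_involutive (G := G)).bijective _ _ (fun d => rfl)

lemma dist_formula {G : SimpleGraph V} (hG : G.Connected) (hdiam : G.diam = 2)
    (x y : V) : G.dist x y = if x = y then 0 else if G.Adj x y then 1 else 2 := by
  have hne : G.ediam ≠ ⊤ := by
    intro h
    rw [SimpleGraph.diam_eq_zero_of_ediam_eq_top h] at hdiam
    omega
  have hle : G.dist x y ≤ 2 := hdiam ▸ SimpleGraph.dist_le_diam hne
  split_ifs with h1 h2
  · simp [h1]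
  · exact SimpleGraph.dist_eq_one_iff_adj.mpr h2
  · have h0 : G.dist x y ≠ 0 := fun h => h1 (hG.dist_eq_zero_iff.mp h)
    have hno : G.dist x y ≠ 1 := fun h => h2 (SimpleGraph.dist_eq_one_iff_adj.mp h)
    omega

lemma nCloser_eq {G : SimpleGraph V} (hG : G.Connected) (hdiam : G.diam = 2)
    {u v : V} (huv : G.Adj u v) :
    G.degree u = triEdge G u v + nCloser G u v := by
  classical
  have key : ∀ w, (G.dist w u < G.dist w v) ↔
      (w = u ∨ (G.Adj u w ∧ ¬ G.Adj v w ∧ w ≠ v)) := by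
    intro w
    rw [dist_formula hG hdiam w u, dist_formula hG hdiam w v]
    have hne : u ≠ v := huv.ne
    by_cases h1 : w = u
    · subst h1
      simp [huv.ne, huv, huv.symm, G.irrefl]
    · by_cases h2 : w = v
      · subst h2
        simp [h1, huv, huv.symm, G.irrefl]
      · simp only [h1, h2, if_false]
        rw [G.adj_comm w u, G.adj_comm w v]
        by_cases h3 : G.Adj u w <;> by_cases h4 : G.Adj v w <;>
          simp [h1, h2, h3, h4]
  have hn : nCloser G u v = ∑ w : V,
      (if w = u ∨ (G.Adj u w ∧ ¬ G.Adj v w ∧ w ≠ v) then 1 else 0) := by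
    have h0 : nCloser G u v = ∑ w : V, (if G.dist w u < G.dist w v then 1 else 0) :=
      Finset.card_filter _ _
    rw [h0]
    exact Finset.sum_congr rfl fun w _ => by simp only [key w]
  have hd : G.degree u = ∑ w : V, (if G.Adj u w then 1 else 0) := by
    rw [← Finset.card_filter, ← SimpleGraph.neighborFinset_eq_filter,
      SimpleGraph.card_neighborFinset_eq_degree]
  have ht : triEdge G u v = ∑ w : V, (if G.Adj u w ∧ G.Adj v w then 1 else 0) :=
    Finset.card_filter _ _
  rw [hn, hd, ht, ← Finset.sum_add_distrib]
  have hpt : ∀ w : V, (if G.Adj u w then 1 else 0) + (if w = u then 1 else 0) =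
      ((if G.Adj u w ∧ G.Adj v w then 1 else 0) +
        (if w = u ∨ (G.Adj u w ∧ ¬ G.Adj v w ∧ w ≠ v) then 1 else 0)) +
      (if w = v then 1 else 0) := by
    intro w
    by_cases h1 : w = u
    · subst h1
      simp [G.irrefl, huv.ne]
    · by_cases h2 : w = v
      · subst h2
        simp [h1, huv, G.irrefl]
      · by_cases h3 : G.Adj u w <;> by_cases h4 : G.Adj v w <;>
          simp [h1, h2, h3, h4]
  have lhs1 : ∑ w : V, (if G.Adj u w then 1 else 0)
      = (∑ w : V, ((if G.Adj u w then 1 else 0) + (if w = u then 1 else 0))) - 1 := by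
    rw [Finset.sum_add_distrib, Finset.sum_ite_eq' Finset.univ u (fun _ => (1:ℕ))]
    simp
  rw [lhs1, Finset.sum_congr rfl fun w _ => hpt w, Finset.sum_add_distrib,
    Finset.sum_ite_eq' Finset.univ v (fun _ => (1:ℕ))]
  simp

lemma triEdge_symm (G : SimpleGraph V) (u v : V) : triEdge G u v = triEdge G v u := by
  classical
  unfold triEdge
  congr 1
  ext w
  simp [and_comm]

lemma tri_sum (G : SimpleGraph V) :
    ∑ e ∈ G.edgeFinset,
      Sym2.lift ⟨fun u v => triEdge G u v, fun _ _ => triEdge_symm G _ _⟩ e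
      = 3 * triCount G := by
  classical
  have hQ : ∀ e : Sym2 V,
      Sym2.lift ⟨fun u v => triEdge G u v, fun _ _ => triEdge_symm G _ _⟩ e
        = ∑ w : V, (if ∀ x ∈ e, G.Adj x w then 1 else 0) := by
    intro e
    induction e with
    | _ a b =>
      simp only [Sym2.lift_mk]
      have h1 : triEdge G a b = ∑ w : V, (if G.Adj a w ∧ G.Adj b w then 1 else 0) :=
        Finset.card_filter _ _
      rw [h1]
      refine Finset.sum_congr rfl fun w _ => ?_
      congr 1
      simp only [Sym2.mem_iff, eq_iff_iff]
      constructor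
      · rintro ⟨ha, hb⟩ x hx
        rcases hx with rfl | rfl
        · exact ha
        · exact hb
      · intro h
        exact ⟨h a (Or.inl rfl), h b (Or.inr rfl)⟩
  rw [Finset.sum_congr rfl fun e _ => hQ e, Finset.sum_comm]
  have hT : 3 * triCount G = ∑ w : V,
      ((G.cliqueFinset 3).filter (fun s => w ∈ s)).card := by
    have h3 : ∀ s ∈ G.cliqueFinset 3, (3:ℕ) = ∑ w : V, (if w ∈ s then 1 else 0) := by
      intro s hs
      rw [← Finset.card_filter]
      have hfs : Finset.univ.filter (fun w => w ∈ s) = s := by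
        ext w; simp
      rw [hfs]
      exact ((SimpleGraph.mem_cliqueFinset_iff.mp hs).card_eq).symm
    rw [triCount, mul_comm, ← smul_eq_mul, ← Finset.sum_const,
      Finset.sum_congr rfl h3, Finset.sum_comm]
    exact Finset.sum_congr rfl fun w _ => (Finset.card_filter _ _).symm
  rw [hT]
  refine Finset.sum_congr rfl fun w _ => ?_
  rw [← Finset.card_filter]
  refine Finset.card_bij
    (fun e _ => Sym2.lift ⟨fun a b => ({w, a, b} : Finset V),
      fun a b => by ext x; simp; tauto⟩ e) ?_ ?_ ?_
  · rintro e he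
    simp only [Finset.mem_filter, SimpleGraph.mem_edgeFinset] at he
    obtain ⟨hmem, hadj⟩ := he
    induction e with
    | _ a b =>
      simp only [Sym2.lift_mk]
      have hab : G.Adj a b := hmem
      have haw : G.Adj a w := hadj a (by simp)
      have hbw : G.Adj b w := hadj b (by simp)
      simp only [Finset.mem_filter]
      constructor
      · rw [SimpleGraph.mem_cliqueFinset_iff]
        exact SimpleGraph.is3Clique_triple_iff.mpr ⟨haw.symm, hbw.symm, hab⟩
      · simp
  · rintro e₁ he₁ e₂ he₂
    simp only [Finset.mem_filter, SimpleGraph.mem_edgeFinset] at he₁ he₂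
    obtain ⟨hm₁, ha₁⟩ := he₁
    obtain ⟨hm₂, ha₂⟩ := he₂
    induction e₁ with
    | _ a b =>
      induction e₂ with
      | _ c d =>
        intro heq
        simp only [Sym2.lift_mk] at heq
        have haw : a ≠ w := (ha₁ a (by simp)).ne
        have hbw : b ≠ w := (ha₁ b (by simp)).ne
        have hab : a ≠ b := hm₁.ne
        have hamem : a ∈ ({w, c, d} : Finset V) := by
          rw [← heq]; simp
        have hbmem : b ∈ ({w, c, d} : Finset V) := by
          rw [← heq]; simp
        simp only [Finset.mem_insert, Finset.mem_singleton] at hamem hbmem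
        rw [Sym2.eq_iff]
        rcases hamem with rfl | rfl | rfl
        · exact absurd rfl haw
        · rcases hbmem with rfl | rfl | rfl
          · exact absurd rfl hbw
          · exact absurd rfl hab
          · exact Or.inl ⟨rfl, rfl⟩
        · rcases hbmem with rfl | rfl | rfl
          · exact absurd rfl hbw
          · exact Or.inr ⟨rfl, rfl⟩
          · exact absurd rfl hab
  · rintro s hs
    simp only [Finset.mem_filter, SimpleGraph.mem_cliqueFinset_iff] at hs
    obtain ⟨hcl, hws⟩ := hs
    obtain ⟨a, b, c, hab, hac, hbc, rfl⟩ := SimpleGraph.is3Clique_iff.mp hcl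
    simp only [Finset.mem_insert, Finset.mem_singleton] at hws
    rcases hws with rfl | rfl | rfl
    · refine ⟨s(b, c), ?_, ?_⟩
      · simp only [Finset.mem_filter, SimpleGraph.mem_edgeFinset, SimpleGraph.mem_edgeSet]
        refine ⟨hbc, ?_⟩
        intro x hx
        rcases Sym2.mem_iff.mp hx with rfl | rfl
        · exact hab.symm
        · exact hac.symm
      · simp only [Sym2.lift_mk]
    · refine ⟨s(a, c), ?_, ?_⟩
      · simp only [Finset.mem_filter, SimpleGraph.mem_edgeFinset, SimpleGraph.mem_edgeSet]
        refine ⟨hac, ?_⟩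
        intro x hx
        rcases Sym2.mem_iff.mp hx with rfl | rfl
        · exact hab
        · exact hbc.symm
      · simp only [Sym2.lift_mk]
        ext x; simp; tauto
    · refine ⟨s(a, b), ?_, ?_⟩
      · simp only [Finset.mem_filter, SimpleGraph.mem_edgeFinset, SimpleGraph.mem_edgeSet]
        refine ⟨hab, ?_⟩
        intro x hx
        rcases Sym2.mem_iff.mp hx with rfl | rfl
        · exact hac
        · exact hbc
      · simp only [Sym2.lift_mk]
        ext x; simp; tauto

end Aux

/-- For a connected graph `G` of diameter `2`,
`PI_v(G) = M₁(G) - 6 t(G)`. -/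
theorem stmt_8 {V : Type*} [Fintype V] (G : SimpleGraph V) (hG : G.Connected)
    (hdiam : G.diam = 2) :
    (PIv G : ℤ) = M1 G - 6 * triCount G := by
  classical
  have e1 : (∑ d : G.Dart, (nCloser G d.fst d.snd + nCloser G d.snd d.fst)) = 2 * PIv G :=
    sum_dart_edge G (Sym2.lift ⟨fun u v => nCloser G u v + nCloser G v u,
      fun _ _ => add_comm _ _⟩)
  have e2 : (∑ d : G.Dart, triEdge G d.fst d.snd) = 2 * (3 * triCount G) := by
    have h := sum_dart_edge G
      (Sym2.lift ⟨fun u v => triEdge G u v, fun _ _ => triEdge_symm G _ _⟩)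
    rw [tri_sum] at h
    exact h
  have e3 : (∑ d : G.Dart, G.degree d.fst) = M1 G := sum_dart_fst_deg G
  have e4 : (∑ d : G.Dart, G.degree d.snd) = M1 G := by
    rw [← sum_dart_symm G (fun a _ => G.degree a)]
    exact e3
  have e5 : (∑ d : G.Dart, triEdge G d.snd d.fst) = ∑ d : G.Dart, triEdge G d.fst d.snd :=
    (sum_dart_symm G (fun a b => triEdge G a b)).symm
  have key : ∑ d : G.Dart, (G.degree d.fst + G.degree d.snd)
      = ∑ d : G.Dart, ((triEdge G d.fst d.snd + nCloser G d.fst d.snd)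
        + (triEdge G d.snd d.fst + nCloser G d.snd d.fst)) :=
    Finset.sum_congr rfl fun d _ => by
      rw [← nCloser_eq hG hdiam d.adj, ← nCloser_eq hG hdiam d.adj.symm]
  simp only [Finset.sum_add_distrib] at key e1
  omega
end

section
/- Let G be a connected simple graph. Then for every edge e = uv of G one has n_u(e) + n_v(e) ≥ deg(u) + deg(v) − 2·t(e), where t(e) is the number of triangles containing the edge e; consequently PI_v(G) ≥ M_1(G) − 6·t(G). -/
/-!
Distance-based topological indices (PI, vertex PI, Szeged, edge Szeged, Zagreb indices,
triangle counts) for finite simple graphs, following Ilić, "Note on PI and Szeged indices".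
-/

open scoped Classical
open Finset

open PaperDefs


section Aux
open scoped Classical
open Finset PaperDefs

variable {V : Type*} [Fintype V]

private lemma key1 (G : SimpleGraph V) (hG : G.Connected) {u v : V} (h : G.Adj u v) :
    (G.degree u : ℤ) - triEdge G u v ≤ nCloser G u v := by
  classical
  set N := G.neighborFinset u with hN
  set A := N.filter (fun w => ¬ G.Adj v w ∧ w ≠ v) with hA
  set B := N.filter (fun w => ¬ (¬ G.Adj v w ∧ w ≠ v)) with hB
  have hcard : A.card + B.card = G.degree u := by
    rw [hA, hB, Finset.card_filter_add_card_filter_not,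
      ← G.card_neighborFinset_eq_degree]
  have hBle : B.card ≤ 1 + triEdge G u v := by
    have hsub : B ⊆ insert v (Finset.univ.filter fun w => G.Adj u w ∧ G.Adj v w) := by
      intro w hw
      rw [hB, Finset.mem_filter, hN, SimpleGraph.mem_neighborFinset] at hw
      obtain ⟨huw, hw2⟩ := hw
      by_cases hwv : w = v
      · exact Finset.mem_insert.mpr (Or.inl hwv)
      · refine Finset.mem_insert.mpr (Or.inr ?_)
        rw [Finset.mem_filter]
        refine ⟨Finset.mem_univ _, huw, ?_⟩
        by_contra hvw
        exact hw2 ⟨hvw, hwv⟩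
    have h1 := Finset.card_le_card hsub
    have h2 := Finset.card_insert_le v (Finset.univ.filter fun w => G.Adj u w ∧ G.Adj v w)
    rw [triEdge]
    omega
  have hins : insert u A ⊆ Finset.univ.filter fun w => G.dist w u < G.dist w v := by
    intro w hw
    rw [Finset.mem_filter]
    refine ⟨Finset.mem_univ _, ?_⟩
    rcases Finset.mem_insert.mp hw with rfl | hw
    · rw [SimpleGraph.dist_self, (SimpleGraph.dist_eq_one_iff_adj).mpr h]
      norm_num
    · rw [hA, Finset.mem_filter, hN, SimpleGraph.mem_neighborFinset] at hw
      obtain ⟨huw, hnvw, hwv⟩ := hw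
      have d1 : G.dist w u = 1 := (SimpleGraph.dist_eq_one_iff_adj).mpr huw.symm
      have d2 : G.dist w v ≠ 0 := by rw [ne_eq, hG.dist_eq_zero_iff]; exact hwv
      have d3 : G.dist w v ≠ 1 := by
        rw [ne_eq, SimpleGraph.dist_eq_one_iff_adj]
        intro hwv'; exact hnvw hwv'.symm
      omega
  have huA : u ∉ A := by
    rw [hA, Finset.mem_filter, hN, SimpleGraph.mem_neighborFinset]
    simp [G.irrefl]
  have hcardins : (insert u A).card = A.card + 1 := Finset.card_insert_of_notMem huA
  have hle : (insert u A).card ≤ nCloser G u v := by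
    rw [nCloser]; exact Finset.card_le_card hins
  omega

private lemma factA (G : SimpleGraph V) :
    ∑ e ∈ G.edgeFinset,
      Sym2.lift ⟨fun a b => G.degree a + G.degree b, fun _ _ => add_comm _ _⟩ e
      = ∑ w : V, G.degree w ^ 2 := by
  classical
  have step1 : ∀ e ∈ G.edgeFinset,
      Sym2.lift ⟨fun a b => G.degree a + G.degree b, fun _ _ => add_comm _ _⟩ e
        = ∑ a : V, if a ∈ e then G.degree a else 0 := by
    intro e he
    induction e using Sym2.ind with
    | _ u v =>
      have hadj : G.Adj u v := by rwa [SimpleGraph.mem_edgeFinset, SimpleGraph.mem_edgeSet] at he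
      have huv : u ≠ v := hadj.ne
      rw [Sym2.lift_mk, ← Finset.sum_filter]
      have : (Finset.univ.filter fun a => a ∈ s(u, v)) = {u, v} := by
        ext a; simp [Sym2.mem_iff]
      rw [this, Finset.sum_pair huv]
  rw [Finset.sum_congr rfl step1, Finset.sum_comm]
  refine Finset.sum_congr rfl fun a _ => ?_
  rw [← Finset.sum_filter]
  have : G.edgeFinset.filter (fun e => a ∈ e) = G.incidenceFinset a := by
    ext e
    simp [SimpleGraph.mem_incidenceFinset, SimpleGraph.incidenceSet,
      SimpleGraph.mem_edgeFinset]
  rw [this, Finset.sum_const, G.card_incidenceFinset_eq_degree, smul_eq_mul, sq]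

private lemma pair_eq {a b c d : V} (hab : a ≠ b) (h : ({a, b} : Finset V) = {c, d}) :
    s(a, b) = s(c, d) := by
  have h' : ∀ x : V, (x = a ∨ x = b) ↔ (x = c ∨ x = d) := by
    intro x
    have := Finset.ext_iff.mp h x
    simpa using this
  rcases (h' a).mp (Or.inl rfl) with rfl | rfl
  · rcases (h' b).mp (Or.inr rfl) with rfl | rfl
    · exact absurd rfl hab
    · rfl
  · rcases (h' b).mp (Or.inr rfl) with rfl | rfl
    · rw [Sym2.eq_swap]
    · exact absurd rfl hab

private lemma factB (G : SimpleGraph V) :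
    ∑ e ∈ G.edgeFinset,
      Sym2.lift ⟨fun a b => triEdge G a b, fun a b => by simp [triEdge, and_comm]⟩ e
      ≤ 3 * triCount G := by
  classical
  set P : Finset ((_ : Sym2 V) × V) :=
    G.edgeFinset.sigma (fun e => Finset.univ.filter fun w => ∀ a ∈ e, G.Adj a w) with hP
  have hcardP : P.card = ∑ e ∈ G.edgeFinset,
      Sym2.lift ⟨fun a b => triEdge G a b, fun a b => by simp [triEdge, and_comm]⟩ e := by
    rw [hP, Finset.card_sigma]
    refine Finset.sum_congr rfl fun e he => ?_
    induction e using Sym2.ind with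
    | _ u v =>
      rw [Sym2.lift_mk]
      congr 1
      ext w
      simp [triEdge, Sym2.mem_iff, forall_eq_or_imp]
  set φ : ((_ : Sym2 V) × V) → Finset V := fun p =>
    insert p.2 (Sym2.lift ⟨fun a b => ({a, b} : Finset V), fun a b => Finset.pair_comm a b⟩ p.1)
    with hφ
  have hmemP : ∀ p ∈ P, p.1 ∈ G.edgeFinset ∧ ∀ a ∈ p.1, G.Adj a p.2 := by
    intro p hp
    rw [hP, Finset.mem_sigma] at hp
    obtain ⟨h1, h2⟩ := hp
    rw [Finset.mem_filter] at h2
    exact ⟨h1, h2.2⟩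
  have hmap : ∀ p ∈ P, φ p ∈ G.cliqueFinset 3 := by
    rintro ⟨e, w⟩ hp
    obtain ⟨he, hadj⟩ := hmemP _ hp
    induction e using Sym2.ind with
    | _ u v =>
      have huv : G.Adj u v := by rwa [SimpleGraph.mem_edgeFinset, SimpleGraph.mem_edgeSet] at he
      have h1 : G.Adj u w := hadj u (Sym2.mem_mk_left u v)
      have h2 : G.Adj v w := hadj v (Sym2.mem_mk_right u v)
      rw [SimpleGraph.mem_cliqueFinset_iff, hφ]
      simp only [Sym2.lift_mk]
      exact SimpleGraph.is3Clique_triple_iff.mpr ⟨h1.symm, h2.symm, huv⟩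
  have hfiber : ∀ T ∈ G.cliqueFinset 3, (P.filter fun p => φ p = T).card ≤ 3 := by
    intro T hT
    have hT3 : T.card = 3 := (SimpleGraph.mem_cliqueFinset_iff.mp hT).card_eq
    have : (P.filter fun p => φ p = T).card ≤ T.card := by
      apply Finset.card_le_card_of_injOn (fun p => p.2)
      · rintro ⟨e, w⟩ hp
        rw [Finset.mem_coe, Finset.mem_filter] at hp
        rw [← hp.2, hφ]
        exact Finset.mem_coe.mpr (Finset.mem_insert_self _ _)
      · rintro ⟨e, w⟩ hp ⟨e', w'⟩ hq hww
        simp only at hww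
        subst hww
        rw [Finset.mem_coe, Finset.mem_filter] at hp hq
        obtain ⟨hpP, hpT⟩ := hp
        obtain ⟨hqP, hqT⟩ := hq
        obtain ⟨heP, hadjP⟩ := hmemP _ hpP
        obtain ⟨heQ, hadjQ⟩ := hmemP _ hqP
        have : e = e' := by
          induction e using Sym2.ind with
          | _ a b =>
            induction e' using Sym2.ind with
            | _ c d =>
              have hab : G.Adj a b := by
                rwa [SimpleGraph.mem_edgeFinset, SimpleGraph.mem_edgeSet] at heP
              have hcd : G.Adj c d := by
                rwa [SimpleGraph.mem_edgeFinset, SimpleGraph.mem_edgeSet] at heQ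
              have haw : G.Adj a w := hadjP a (Sym2.mem_mk_left a b)
              have hbw : G.Adj b w := hadjP b (Sym2.mem_mk_right a b)
              have hcw : G.Adj c w := hadjQ c (Sym2.mem_mk_left c d)
              have hdw : G.Adj d w := hadjQ d (Sym2.mem_mk_right c d)
              have hnw1 : w ∉ ({a, b} : Finset V) := by
                simp only [Finset.mem_insert, Finset.mem_singleton]
                rintro (rfl | rfl)
                · exact G.irrefl haw
                · exact G.irrefl hbw
              have hnw2 : w ∉ ({c, d} : Finset V) := by
                simp only [Finset.mem_insert, Finset.mem_singleton]
                rintro (rfl | rfl)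
                · exact G.irrefl hcw
                · exact G.irrefl hdw
              have heq : insert w ({a, b} : Finset V) = insert w ({c, d} : Finset V) := by
                have h1 : φ ⟨s(a, b), w⟩ = T := hpT
                have h2 : φ ⟨s(c, d), w⟩ = T := hqT
                rw [hφ] at h1 h2
                simp only [Sym2.lift_mk] at h1 h2
                rw [h1, h2]
              have hpe : ({a, b} : Finset V) = {c, d} := by
                have := congrArg (fun s => Finset.erase s w) heq
                simpa [Finset.erase_insert hnw1, Finset.erase_insert hnw2] using this
              exact pair_eq hab.ne hpe
        subst this
        rfl
    omega
  have hfib := Finset.card_eq_sum_card_fiberwise hmap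
  have hsum : ∑ T ∈ G.cliqueFinset 3, (P.filter fun p => φ p = T).card
      ≤ ∑ T ∈ G.cliqueFinset 3, 3 := Finset.sum_le_sum hfiber
  rw [Finset.sum_const, smul_eq_mul] at hsum
  rw [← hcardP, triCount]
  omega

end Aux

/-- In a connected graph, every edge `e = uv` satisfies
`n_u(e) + n_v(e) ≥ deg(u) + deg(v) - 2 t(e)`; consequently `PI_v(G) ≥ M₁(G) - 6 t(G)`. -/
theorem stmt_9 {V : Type*} [Fintype V] (G : SimpleGraph V) (hG : G.Connected) :
    (∀ u v : V, G.Adj u v →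
        (G.degree u + G.degree v : ℤ) - 2 * triEdge G u v ≤
          nCloser G u v + nCloser G v u) ∧
      (M1 G : ℤ) - 6 * triCount G ≤ PIv G := by
  classical
  have part1 : ∀ u v : V, G.Adj u v →
      (G.degree u + G.degree v : ℤ) - 2 * triEdge G u v ≤
        nCloser G u v + nCloser G v u := by
    intro u v h
    have h1 := key1 G hG h
    have h2 := key1 G hG h.symm
    have h3 : triEdge G v u = triEdge G u v := by simp [triEdge, and_comm]
    rw [h3] at h2
    push_cast at h1 h2 ⊢
    linarith
  refine ⟨part1, ?_⟩
  have hle : ∀ e ∈ G.edgeFinset,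
      ((Sym2.lift ⟨fun a b => G.degree a + G.degree b, fun _ _ => add_comm _ _⟩ e : ℕ) : ℤ)
        - 2 * (Sym2.lift ⟨fun a b => triEdge G a b, fun a b => by simp [triEdge, and_comm]⟩ e : ℕ)
        ≤ ((Sym2.lift ⟨fun u v => nCloser G u v + nCloser G v u, fun _ _ => add_comm _ _⟩ e : ℕ) : ℤ) := by
    intro e he
    induction e using Sym2.ind with
    | _ u v =>
      have hadj : G.Adj u v := by rwa [SimpleGraph.mem_edgeFinset, SimpleGraph.mem_edgeSet] at he
      simp only [Sym2.lift_mk]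
      have := part1 u v hadj
      push_cast at this ⊢
      linarith
  have hsum := Finset.sum_le_sum hle
  rw [Finset.sum_sub_distrib, ← Finset.mul_sum, ← Nat.cast_sum, ← Nat.cast_sum, ← Nat.cast_sum]
    at hsum
  have hA := factA G
  have hB := factB G
  rw [PIv, M1]
  omega
end

section
/- Let G be a connected simple graph with m edges and diameter 2, such that every edge of G belongs to exactly t triangles. Then Sz(G) = M_2(G) − t·M_1(G) + m·t². -/
/-!
Distance-based topological indices (PI, vertex PI, Szeged, edge Szeged, Zagreb indices,
triangle counts) for finite simple graphs, following Ilić, "Note on PI and Szeged indices".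
-/

open scoped Classical
open Finset

open PaperDefs

section MyAux
variable {V : Type*} [Fintype V]

variable {V : Type*} [Fintype V]

lemma dart_sum_edge (G : SimpleGraph V) [DecidableRel G.Adj] (f : V → V → ℤ)
    (hf : ∀ a b, f a b = f b a) :
    ∑ d : G.Dart, f d.toProd.1 d.toProd.2 = ∑ e ∈ G.edgeFinset, 2 * Sym2.lift ⟨f, hf⟩ e := by
  classical
  rw [← Finset.sum_fiberwise_of_maps_to (g := SimpleGraph.Dart.edge) (t := G.edgeFinset)
    (fun d _ => by simp [SimpleGraph.Dart.edge_mem])]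
  refine Finset.sum_congr rfl fun e he => ?_
  have hcongr : ∀ d ∈ Finset.univ.filter (fun d : G.Dart => d.edge = e),
      f d.toProd.1 d.toProd.2 = Sym2.lift ⟨f, hf⟩ e := by
    intro d hd
    simp only [Finset.mem_filter] at hd
    rw [← hd.2]
    rfl
  rw [Finset.sum_congr rfl hcongr, Finset.sum_const]
  have : (Finset.univ.filter (fun d : G.Dart => d.edge = e)).card = 2 := by
    have := G.dart_edge_fiber_card e (SimpleGraph.mem_edgeFinset.mp he)
    convert this using 2
  rw [this]
  simp [two_mul]

lemma dart_sum_fst (G : SimpleGraph V) [DecidableRel G.Adj] (f : V → V → ℤ) :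
    ∑ d : G.Dart, f d.toProd.1 d.toProd.2 = ∑ v, ∑ w ∈ G.neighborFinset v, f v w := by
  classical
  rw [← Finset.sum_fiberwise_of_maps_to (g := fun d : G.Dart => d.toProd.1) (t := Finset.univ)
    (fun d _ => Finset.mem_univ _)]
  refine Finset.sum_congr rfl fun v _ => ?_
  have him : (Finset.univ.filter (fun d : G.Dart => d.toProd.1 = v))
      = Finset.univ.image (G.dartOfNeighborSet v) := by
    have := G.dart_fst_fiber v
    convert this using 2
  rw [him, Finset.sum_image (fun a _ b _ h => G.dartOfNeighborSet_injective v h)]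
  rw [Finset.sum_subtype (G.neighborFinset v) (fun w => G.mem_neighborFinset v w) (fun w => f v w)]
  rfl

lemma edge_sum_deg (G : SimpleGraph V) [DecidableRel G.Adj] :
    ∑ e ∈ G.edgeFinset,
      Sym2.lift ⟨fun u v => ((G.degree u : ℤ) + G.degree v), fun _ _ => add_comm _ _⟩ e
      = ∑ v : V, (G.degree v : ℤ) ^ 2 := by
  classical
  apply mul_left_cancel₀ (two_ne_zero : (2 : ℤ) ≠ 0)
  rw [Finset.mul_sum]
  rw [← dart_sum_edge G _ (fun a b => add_comm _ _)]
  rw [dart_sum_fst G (fun a b => (G.degree a : ℤ) + G.degree b)]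
  have key : ∑ v, ∑ w ∈ G.neighborFinset v, ((G.degree v : ℤ) + G.degree w)
      = ∑ v, ((G.degree v : ℤ)^2 + ∑ w ∈ G.neighborFinset v, (G.degree w : ℤ)) := by
    refine Finset.sum_congr rfl fun v _ => ?_
    rw [Finset.sum_add_distrib, Finset.sum_const, SimpleGraph.card_neighborFinset_eq_degree,
      nsmul_eq_mul, sq]
  rw [key, Finset.sum_add_distrib]
  have hswap : ∑ v, ∑ w ∈ G.neighborFinset v, (G.degree w : ℤ) = ∑ w : V, (G.degree w : ℤ)^2 := by
    simp only [SimpleGraph.neighborFinset_eq_filter, Finset.sum_filter]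
    rw [Finset.sum_comm]
    refine Finset.sum_congr rfl fun w _ => ?_
    rw [Finset.sum_congr rfl fun v _ => if_congr (G.adj_comm v w) rfl rfl,
      ← Finset.sum_filter, Finset.sum_const,
      ← SimpleGraph.neighborFinset_eq_filter, SimpleGraph.card_neighborFinset_eq_degree,
      nsmul_eq_mul, sq]
  rw [hswap]
  ring

lemma nCloser_add_tri (G : SimpleGraph V) (hG : G.Connected) (hdiam : G.diam = 2)
    {u v : V} (huv : G.Adj u v) :
    nCloser G u v + triEdge G u v = G.degree u := by
  classical
  have hdle : ∀ a b : V, G.dist a b ≤ 2 := by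
    intro a b
    have := G.dist_le_diam (u := a) (v := b)
      (G.ediam_ne_top_of_diam_ne_zero (by rw [hdiam]; norm_num))
    omega
  have hdist2 : ∀ a b : V, a ≠ b → ¬ G.Adj a b → G.dist a b = 2 := by
    intro a b hne hadj
    have h0 : G.dist a b ≠ 0 := fun h => hne (hG.dist_eq_zero_iff.mp h)
    have h1 : G.dist a b ≠ 1 := fun h => hadj (SimpleGraph.dist_eq_one_iff_adj.mp h)
    have := hdle a b
    omega
  have hvu : v ≠ u := fun h => G.irrefl (h ▸ huv)
  set A := Finset.univ.filter fun w => G.Adj u w ∧ ¬ G.Adj v w ∧ w ≠ v with hA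
  have hset : (Finset.univ.filter fun w => G.dist w u < G.dist w v) = insert u A := by
    ext w
    simp only [hA, Finset.mem_insert, Finset.mem_filter, Finset.mem_univ, true_and]
    constructor
    · intro hlt
      by_cases hwu : w = u
      · exact Or.inl hwu
      · right
        have h0 : G.dist w u ≠ 0 := fun h => hwu (hG.dist_eq_zero_iff.mp h)
        have hle := hdle w v
        have hwu1 : G.dist w u = 1 := by
          by_contra h1
          have := hdist2 w u hwu (fun h => h1 (SimpleGraph.dist_eq_one_iff_adj.mpr h))
          omega
        have hadjwu : G.Adj w u := SimpleGraph.dist_eq_one_iff_adj.mp hwu1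
        have hwv : w ≠ v := by
          intro h; subst h
          rw [SimpleGraph.dist_self] at hlt; omega
        have hnadj : ¬ G.Adj w v := by
          intro h
          rw [SimpleGraph.dist_eq_one_iff_adj.mpr h] at hlt
          omega
        exact ⟨hadjwu.symm, fun h => hnadj h.symm, hwv⟩
    · rintro (h | ⟨hadj, hnadj, hne⟩)
      · subst h
        have h1 : G.dist w v = 1 := SimpleGraph.dist_eq_one_iff_adj.mpr huv
        rw [SimpleGraph.dist_self, h1]
        omega
      · have h1 : G.dist w u = 1 := SimpleGraph.dist_eq_one_iff_adj.mpr hadj.symm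
        have h2 : G.dist w v = 2 := hdist2 w v hne (fun h => hnadj h.symm)
        omega
  have huA : u ∉ A := by
    simp only [hA, Finset.mem_filter, Finset.mem_univ, true_and]
    exact fun h => G.irrefl h.1
  have hcard1 : nCloser G u v = A.card + 1 := by
    rw [nCloser, hset, Finset.card_insert_of_notMem huA]
  -- degree side
  set C := Finset.univ.filter fun w => G.Adj u w ∧ G.Adj v w with hC
  have hN : Finset.univ.filter (fun w => G.Adj u w) = C ∪ insert v A := by
    ext w
    simp only [hC, hA, Finset.mem_union, Finset.mem_insert, Finset.mem_filter,
      Finset.mem_univ, true_and]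
    constructor
    · intro hadj
      by_cases hwv : w = v
      · exact Or.inr (Or.inl hwv)
      · by_cases hvw : G.Adj v w
        · exact Or.inl ⟨hadj, hvw⟩
        · exact Or.inr (Or.inr ⟨hadj, hvw, hwv⟩)
    · rintro (⟨h, _⟩ | rfl | ⟨h, _, _⟩) <;> first | exact h | exact huv
  have hdisj : Disjoint C (insert v A) := by
    rw [Finset.disjoint_insert_right]
    constructor
    · simp only [hC, Finset.mem_filter, Finset.mem_univ, true_and]
      exact fun h => G.irrefl h.2
    · rw [Finset.disjoint_left]
      intro w hw hw'
      simp only [hC, Finset.mem_filter, Finset.mem_univ, true_and] at hw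
      simp only [hA, Finset.mem_filter, Finset.mem_univ, true_and] at hw'
      exact hw'.2.1 hw.2
  have hvA : v ∉ A := by
    simp only [hA, Finset.mem_filter, Finset.mem_univ, true_and]
    exact fun h => h.2.2 rfl
  have hdeg : G.degree u = C.card + (A.card + 1) := by
    rw [← SimpleGraph.card_neighborFinset_eq_degree, SimpleGraph.neighborFinset_eq_filter]
    have : Finset.univ.filter (G.Adj u) = C ∪ insert v A := by
      convert hN using 2
    rw [this, Finset.card_union_of_disjoint hdisj, Finset.card_insert_of_notMem hvA]
  have : triEdge G u v = C.card := rfl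
  omega


end MyAux

/-- For a connected graph `G` with `m` edges and diameter `2` in which every
edge lies in exactly `t` triangles, `Sz(G) = M₂(G) - t·M₁(G) + m·t²`. -/
theorem stmt_10 {V : Type*} [Fintype V] (G : SimpleGraph V) (hG : G.Connected)
    (hdiam : G.diam = 2) (t : ℕ) (ht : ∀ u v : V, G.Adj u v → triEdge G u v = t) :
    (Sz G : ℤ) = M2 G - t * M1 G + G.edgeFinset.card * t ^ 2 := by
  classical
  have hlift : ∀ e, e ∈ G.edgeFinset →
      ((Sym2.lift ⟨fun u v => nCloser G u v * nCloser G v u, fun _ _ => mul_comm _ _⟩ e : ℕ) : ℤ)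
      = Sym2.lift ⟨fun u v => ((G.degree u : ℤ) * G.degree v), fun _ _ => mul_comm _ _⟩ e
        - t * Sym2.lift ⟨fun u v => ((G.degree u : ℤ) + G.degree v), fun _ _ => add_comm _ _⟩ e
        + (t : ℤ)^2 := by
    intro e
    induction e using Sym2.ind with
    | _ x y =>
      intro he
      have hadj : G.Adj x y := G.mem_edgeSet.mp (SimpleGraph.mem_edgeFinset.mp he)
      have h1 : nCloser G x y + triEdge G x y = G.degree x :=
        nCloser_add_tri G hG hdiam hadj
      have h2 : nCloser G y x + triEdge G y x = G.degree y :=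
        nCloser_add_tri G hG hdiam hadj.symm
      have ht1 : triEdge G x y = t := ht x y hadj
      have ht2 : triEdge G y x = t := ht y x hadj.symm
      have hx : (nCloser G x y : ℤ) = G.degree x - t := by
        rw [ht1] at h1
        have := congrArg (Nat.cast : ℕ → ℤ) h1
        push_cast at this
        linarith
      have hy : (nCloser G y x : ℤ) = G.degree y - t := by
        rw [ht2] at h2
        have := congrArg (Nat.cast : ℕ → ℤ) h2
        push_cast at this
        linarith
      simp only [Sym2.lift_mk]
      push_cast
      rw [hx, hy]
      ring
  have hSz : (Sz G : ℤ) = ∑ e ∈ G.edgeFinset,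
      ((Sym2.lift ⟨fun u v => nCloser G u v * nCloser G v u, fun _ _ => mul_comm _ _⟩ e : ℕ) : ℤ) := by
    rw [Sz]
    push_cast
    rfl
  have hM2 : (M2 G : ℤ) = ∑ e ∈ G.edgeFinset,
      Sym2.lift ⟨fun u v => ((G.degree u : ℤ) * G.degree v), fun _ _ => mul_comm _ _⟩ e := by
    rw [M2]
    push_cast
    refine Finset.sum_congr rfl fun e _ => ?_
    induction e using Sym2.ind with
    | _ x y => simp [Sym2.lift_mk]
  have hM1 : (M1 G : ℤ) = ∑ e ∈ G.edgeFinset,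
      Sym2.lift ⟨fun u v => ((G.degree u : ℤ) + G.degree v), fun _ _ => add_comm _ _⟩ e := by
    rw [edge_sum_deg G, M1]
    push_cast
    rfl
  rw [hSz, Finset.sum_congr rfl hlift]
  rw [Finset.sum_add_distrib, Finset.sum_sub_distrib, ← Finset.mul_sum, Finset.sum_const,
    nsmul_eq_mul, ← hM2, ← hM1]
end

section
/- Let G be a connected strongly regular graph SRG(v, k, λ, μ) with μ ≥ 1 that is not complete, and let m = vk/2 be its number of edges. Then PI_v(G) = v·k² − v·k·λ and Sz(G) = m·k² − 2·m·k·λ + m·λ². -/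
/-!
Distance-based topological indices (PI, vertex PI, Szeged, edge Szeged, Zagreb indices,
triangle counts) for finite simple graphs, following Ilić, "Note on PI and Szeged indices".
-/

open scoped Classical
open Finset

open PaperDefs

section Aux
open Finset
variable {V : Type*} [Fintype V]

lemma aux_dist_two (G : SimpleGraph V) [DecidableRel G.Adj] {u w : V} (hne : w ≠ u)
    (hna : ¬ G.Adj w u) (hc : (G.commonNeighbors w u).Nonempty) : G.dist w u = 2 := by
  obtain ⟨x, hx1, hx2⟩ := hc
  have hw : G.Adj w x := hx1
  have hu : G.Adj x u := (G.adj_symm hx2)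
  have h2 : G.dist w u ≤ 2 := by
    have := SimpleGraph.dist_le (hw.toWalk.append hu.toWalk)
    simpa using this
  have h0 : G.dist w u ≠ 0 := by
    intro h
    rcases SimpleGraph.dist_eq_zero_iff_eq_or_not_reachable.mp h with h | h
    · exact hne h
    · exact h ⟨hw.toWalk.append hu.toWalk⟩
  have h1 : G.dist w u ≠ 1 := fun h => hna (SimpleGraph.dist_eq_one_iff_adj.mp h)
  omega

lemma aux_common_nonempty (G : SimpleGraph V) [DecidableRel G.Adj] {v k l μ : ℕ}
    (hsrg : G.IsSRGWith v k l μ) (hμ : 1 ≤ μ) {x y : V} (hne : x ≠ y) (hna : ¬ G.Adj x y) :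
    (G.commonNeighbors x y).Nonempty := by
  have hc := hsrg.of_not_adj hne hna
  have : 0 < Fintype.card (G.commonNeighbors x y) := by omega
  rw [Fintype.card_pos_iff] at this
  exact Set.nonempty_coe_sort.mp this

lemma aux_nCloser (G : SimpleGraph V) [DecidableRel G.Adj] {v k l μ : ℕ}
    (hG : G.Connected) (hsrg : G.IsSRGWith v k l μ) (hμ : 1 ≤ μ) {u w : V}
    (h : G.Adj u w) : nCloser G u w = k - l ∧ l + 1 ≤ k := by
  classical
  set T : Finset V := (G.neighborFinset u).filter (fun x => ¬ (x = w ∨ G.Adj w x)) with hT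
  set C : Finset V := (G.neighborFinset u).filter (fun x => x = w ∨ G.Adj w x) with hC
  have hCl : C.card = l + 1 := by
    have hCin : C = insert w ((G.commonNeighbors u w).toFinset) := by
      ext x
      simp only [hC, Finset.mem_filter, SimpleGraph.mem_neighborFinset, Finset.mem_insert,
        Set.mem_toFinset, SimpleGraph.mem_commonNeighbors]
      constructor
      · rintro ⟨hux, hxw | hwx⟩
        · exact Or.inl hxw
        · exact Or.inr ⟨hux, hwx⟩
      · rintro (rfl | ⟨hux, hwx⟩)
        · exact ⟨h, Or.inl rfl⟩
        · exact ⟨hux, Or.inr hwx⟩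
    have hwn : w ∉ (G.commonNeighbors u w).toFinset := by
      simp [SimpleGraph.mem_commonNeighbors]
    rw [hCin, Finset.card_insert_of_notMem hwn, Set.toFinset_card, hsrg.of_adj u w h]
  have hdeg : (G.neighborFinset u).card = k := by
    rw [G.card_neighborFinset_eq_degree]; exact hsrg.regular u
  have hsub : l + 1 ≤ k := by
    rw [← hCl, ← hdeg]; exact Finset.card_filter_le _ _
  have hTcard : T.card = k - (l + 1) := by
    have hsum : C.card + T.card = (G.neighborFinset u).card := by
      rw [hC, hT]
      exact Finset.card_filter_add_card_filter_not (fun x => x = w ∨ G.Adj w x)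
    omega
  have hset : (Finset.univ.filter fun x => G.dist x u < G.dist x w) = insert u T := by
    ext x
    simp only [Finset.mem_filter, Finset.mem_univ, true_and, Finset.mem_insert, hT,
      SimpleGraph.mem_neighborFinset]
    constructor
    · intro hd
      by_cases hxu : x = u
      · exact Or.inl hxu
      have hxu0 : G.dist x u ≠ 0 := fun h0 => hxu (hG.dist_eq_zero_iff.mp h0)
      have hxw : x ≠ w := by
        rintro rfl
        rw [SimpleGraph.dist_self] at hd
        omega
      have hnaw : ¬ G.Adj x w := by
        intro ha
        rw [SimpleGraph.dist_eq_one_iff_adj.mpr ha] at hd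
        omega
      have hdw : G.dist x w = 2 :=
        aux_dist_two G hxw hnaw (aux_common_nonempty G hsrg hμ hxw hnaw)
      have hdu : G.dist x u = 1 := by omega
      have hadju : G.Adj u x := G.adj_symm (SimpleGraph.dist_eq_one_iff_adj.mp hdu)
      refine Or.inr ⟨hadju, ?_⟩
      push_neg
      exact ⟨hxw, fun hwx => hnaw (G.adj_symm hwx)⟩
    · rintro (rfl | ⟨hadj, hrest⟩)
      · rw [SimpleGraph.dist_self, SimpleGraph.dist_eq_one_iff_adj.mpr h]
        omega
      · push_neg at hrest
        obtain ⟨hxw, hwx⟩ := hrest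
        have hdu : G.dist x u = 1 := SimpleGraph.dist_eq_one_iff_adj.mpr (G.adj_symm hadj)
        have hnaw : ¬ G.Adj x w := fun ha => hwx (G.adj_symm ha)
        have hdw : G.dist x w = 2 :=
          aux_dist_two G hxw hnaw (aux_common_nonempty G hsrg hμ hxw hnaw)
        omega
  have huT : u ∉ T := by
    simp [hT]
  constructor
  · rw [nCloser]
    rw [hset, Finset.card_insert_of_notMem huT, hTcard]
    omega
  · exact hsub

lemma aux_PIv (G : SimpleGraph V) (c mm : ℕ)
    (hmm : ∀ (inst : Fintype G.edgeSet), mm = (@SimpleGraph.edgeFinset V G inst).card)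
    (h : ∀ u w : V, G.Adj u w → nCloser G u w + nCloser G w u = c) :
    PIv G = mm * c := by
  unfold PIv
  refine (Finset.sum_congr rfl (g := fun _ => c) ?_).trans ?_
  · intro e he
    revert he
    refine Sym2.ind (fun a b he => ?_) e
    have hab : G.Adj a b := SimpleGraph.mem_edgeFinset.mp he
    rw [Sym2.lift_mk]
    exact h a b hab
  · rw [Finset.sum_const, smul_eq_mul, ← hmm _]

lemma aux_Sz (G : SimpleGraph V) (c mm : ℕ)
    (hmm : ∀ (inst : Fintype G.edgeSet), mm = (@SimpleGraph.edgeFinset V G inst).card)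
    (h : ∀ u w : V, G.Adj u w → nCloser G u w * nCloser G w u = c) :
    Sz G = mm * c := by
  unfold Sz
  refine (Finset.sum_congr rfl (g := fun _ => c) ?_).trans ?_
  · intro e he
    revert he
    refine Sym2.ind (fun a b he => ?_) e
    have hab : G.Adj a b := SimpleGraph.mem_edgeFinset.mp he
    rw [Sym2.lift_mk]
    exact h a b hab
  · rw [Finset.sum_const, smul_eq_mul, ← hmm _]

end Aux

/-- For a connected, non-complete strongly regular graph `SRG(v, k, λ, μ)`
with `μ ≥ 1` and `m` edges, `PI_v(G) = v k² - v k λ` and `Sz(G) = m k² - 2 m k λ + m λ²`. -/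
theorem stmt_11 {V : Type*} [Fintype V] (G : SimpleGraph V) [DecidableRel G.Adj]
    (hG : G.Connected) (v k l μ : ℕ) (hsrg : G.IsSRGWith v k l μ)
    (hμ : 1 ≤ μ) (hnc : G ≠ ⊤) (m : ℕ) (hm : m = G.edgeFinset.card) :
    (PIv G : ℤ) = v * k ^ 2 - v * k * l ∧
      (Sz G : ℤ) = m * k ^ 2 - 2 * m * k * l + m * l ^ 2 := by
  classical
  have hmm : ∀ (inst : Fintype G.edgeSet),
      m = (@SimpleGraph.edgeFinset V G inst).card := fun inst =>
    hm.trans (congrArg (fun i => (@SimpleGraph.edgeFinset V G i).card)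
      (Subsingleton.elim _ inst))
  by_cases hE : G.edgeFinset = ∅
  · have hA : ∀ a b : V, ¬ G.Adj a b := by
      intro a b hab
      have hmem : s(a, b) ∈ G.edgeFinset := SimpleGraph.mem_edgeFinset.mpr hab
      rw [hE] at hmem
      simp at hmem
    obtain ⟨x⟩ := hG.nonempty
    have hk : k = 0 := by
      have h0 := hsrg.regular x
      have hne : G.neighborFinset x = ∅ :=
        Finset.eq_empty_of_forall_notMem (by simp [hA])
      rw [← G.card_neighborFinset_eq_degree, hne, Finset.card_empty] at h0
      omega
    have hm0 : m = 0 := by rw [hm, hE]; simp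
    have h1 : PIv G = 0 := by
      rw [aux_PIv G 0 m hmm (fun a b hab => absurd hab (hA a b))]
      simp
    have h2 : Sz G = 0 := by
      rw [aux_Sz G 0 m hmm (fun a b hab => absurd hab (hA a b))]
      simp
    rw [h1, h2, hk, hm0]
    norm_num
  · obtain ⟨e, he⟩ := Finset.nonempty_iff_ne_empty.mpr hE
    have hlk : l + 1 ≤ k := by
      revert he
      refine Sym2.ind (fun a b he => ?_) e
      have hab : G.Adj a b := (SimpleGraph.mem_edgeFinset.mp he)
      exact (aux_nCloser G hG hsrg hμ hab).2
    have hPI : PIv G = m * (2 * (k - l)) :=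
      aux_PIv G (2 * (k - l)) m hmm (fun a b hab => by
        rw [(aux_nCloser G hG hsrg hμ hab).1,
          (aux_nCloser G hG hsrg hμ (G.adj_symm hab)).1]
        omega)
    have hSz : Sz G = m * ((k - l) * (k - l)) :=
      aux_Sz G ((k - l) * (k - l)) m hmm (fun a b hab => by
        rw [(aux_nCloser G hG hsrg hμ hab).1,
          (aux_nCloser G hG hsrg hμ (G.adj_symm hab)).1])
    have hhs : v * k = 2 * m := by
      rw [hm, ← SimpleGraph.sum_degrees_eq_twice_card_edges, ← hsrg.card]
      simp [hsrg.regular _, Finset.sum_const, mul_comm]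
    have hl : l ≤ k := by omega
    have hcast : ((k - l : ℕ) : ℤ) = (k : ℤ) - l := by
      exact_mod_cast Int.ofNat_sub hl
    constructor
    · rw [hPI]
      push_cast [hcast]
      have h2m : (v : ℤ) * k = 2 * m := by exact_mod_cast hhs
      nlinarith [h2m]
    · rw [hSz]
      push_cast [hcast]
      ring
end

section
/- Let G = K_{n_1, n_2, …, n_k} be a complete k-partite graph with n vertices and m edges. Then PI_v(G) = n·m − 3·t(G); more precisely, for every edge e = uv of G one has n_u(e) + n_v(e) = n − t(e), where t(e) is the number of triangles containing e. -/
/-!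
Distance-based topological indices (PI, vertex PI, Szeged, edge Szeged, Zagreb indices,
triangle counts) for finite simple graphs, following Ilić, "Note on PI and Szeged indices".
-/

open scoped Classical
open Finset

open PaperDefs

section Helpers
variable {V : Type*} [Fintype V] {ι : Type*}

/-- Key counting: for a complete multipartite graph, `n_u(e)` equals the number
of vertices in the part of `v`. -/
lemma nCloser_eq_s13 (G : SimpleGraph V) (f : V → ι)
    (hf : ∀ u v : V, G.Adj u v ↔ f u ≠ f v) {u v : V} (h : G.Adj u v) :
    (Finset.univ.filter fun w => G.dist w u < G.dist w v).card
      = (Finset.univ.filter fun w => f w = f v).card := by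
  have hne : f u ≠ f v := (hf u v).1 h
  have huv : u ≠ v := h.ne
  have hdist1 : ∀ a b : V, f a ≠ f b → G.dist a b = 1 := fun a b hab =>
    SimpleGraph.dist_eq_one_iff_adj.2 ((hf a b).2 hab)
  have hdist2 : ∀ a b : V, a ≠ b → f a = f b → 2 ≤ G.dist a b := by
    intro a b hab hfab
    have hreach : G.Reachable a b := by
      by_cases hc : f a = f u
      · have h1 : G.Adj a v := (hf a v).2 (by rw [hc]; exact hne)
        have h2 : G.Adj v b := (hf v b).2 (by rw [← hfab, hc]; exact hne.symm)
        exact h1.reachable.trans h2.reachable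
      · have h1 : G.Adj a u := (hf a u).2 hc
        have h2 : G.Adj u b := (hf u b).2 (fun e => hc (hfab.trans e.symm))
        exact h1.reachable.trans h2.reachable
    have h0 : G.dist a b ≠ 0 := (hreach.pos_dist_of_ne hab).ne'
    have h1 : G.dist a b ≠ 1 := fun e =>
      ((hf a b).1 (SimpleGraph.dist_eq_one_iff_adj.1 e)) hfab
    omega
  have hset : (Finset.univ.filter fun w => G.dist w u < G.dist w v)
      = insert u (Finset.univ.filter fun w => f w = f v ∧ w ≠ v) := by
    ext w
    simp only [mem_filter, mem_univ, true_and, mem_insert]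
    constructor
    · intro hw
      by_cases hwu : w = u
      · exact Or.inl hwu
      by_cases hwv : w = v
      · subst hwv
        rw [SimpleGraph.dist_self] at hw; omega
      by_cases hfu : f w = f u
      · exfalso
        have := hdist2 w u hwu hfu
        have := hdist1 w v (hfu ▸ hne)
        omega
      by_cases hfv : f w = f v
      · exact Or.inr ⟨hfv, hwv⟩
      · exfalso
        rw [hdist1 w u hfu, hdist1 w v hfv] at hw; omega
    · rintro (rfl | ⟨hfv, hwv⟩)
      · rw [SimpleGraph.dist_self]
        have := hdist1 w v hne; omega
      · have h2 := hdist2 w v hwv hfv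
        have h1 := hdist1 w u (by rw [hfv]; exact fun e => hne e.symm)
        omega
  have hset2 : (Finset.univ.filter fun w => f w = f v)
      = insert v (Finset.univ.filter fun w => f w = f v ∧ w ≠ v) := by
    ext w
    simp only [mem_filter, mem_univ, true_and, mem_insert]
    constructor
    · intro hw
      by_cases hwv : w = v
      · exact Or.inl hwv
      · exact Or.inr ⟨hw, hwv⟩
    · rintro (rfl | ⟨hfv, _⟩)
      · rfl
      · exact hfv
  rw [hset, hset2, card_insert_of_notMem, card_insert_of_notMem]
  · simp
  · simp [huv, hne]

lemma edge_tri_count (G : SimpleGraph V) {u v : V} (h : G.Adj u v) :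
    (Finset.univ.filter fun w => G.Adj u w ∧ G.Adj v w).card
      = ((G.cliqueFinset 3).filter fun s => ∀ x ∈ s(u, v), x ∈ s).card := by
  apply Finset.card_bij (fun w _ => ({u, v, w} : Finset V))
  · intro w hw
    simp only [mem_filter, mem_univ, true_and] at hw
    simp only [mem_filter, SimpleGraph.mem_cliqueFinset_iff]
    refine ⟨SimpleGraph.is3Clique_triple_iff.2 ⟨h, hw.1, hw.2⟩, ?_⟩
    intro x hx
    rw [Sym2.mem_iff] at hx
    rcases hx with rfl | rfl <;> simp
  · intro w hw w' hw' hww'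
    simp only [mem_filter, mem_univ, true_and] at hw hw'
    have : w ∈ ({u, v, w'} : Finset V) := hww' ▸ (by simp)
    simp only [mem_insert, mem_singleton] at this
    rcases this with rfl | rfl | rfl
    · exact absurd rfl hw.1.ne
    · exact absurd rfl hw.2.ne
    · rfl
  · intro s hs
    simp only [mem_filter, SimpleGraph.mem_cliqueFinset_iff] at hs
    obtain ⟨hclique, hsub⟩ := hs
    have hu : u ∈ s := hsub u (by simp)
    have hv : v ∈ s := hsub v (by simp)
    have hsub2 : ({u, v} : Finset V) ⊆ s := by
      intro x hx
      simp only [mem_insert, mem_singleton] at hx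
      rcases hx with rfl | rfl <;> assumption
    have hcard : (s \ {u, v}).card = 1 := by
      rw [Finset.card_sdiff_of_subset hsub2, hclique.card_eq, Finset.card_pair h.ne]
    obtain ⟨w, hw⟩ := Finset.card_eq_one.1 hcard
    have hws : w ∈ s \ {u, v} := hw ▸ Finset.mem_singleton_self w
    simp only [mem_sdiff, mem_insert, mem_singleton, not_or] at hws
    obtain ⟨hwmem, hwu, hwv⟩ := hws
    refine ⟨w, ?_, ?_⟩
    · simp only [mem_filter, mem_univ, true_and]
      exact ⟨hclique.1 hu hwmem (Ne.symm hwu), hclique.1 hv hwmem (Ne.symm hwv)⟩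
    · apply Finset.eq_of_subset_of_card_le
      · intro x hx
        simp only [mem_insert, mem_singleton] at hx
        rcases hx with rfl | rfl | rfl <;> assumption
      · have h3 : ({u, v, w} : Finset V).card = 3 :=
          Finset.card_eq_three.2 ⟨u, v, w, h.ne, fun e => hwu e.symm, fun e => hwv e.symm, rfl⟩
        rw [hclique.card_eq, h3]
  
lemma tri_edges_count (G : SimpleGraph V) {s : Finset V} (hs : s ∈ G.cliqueFinset 3) :
    (G.edgeFinset.filter fun e => ∀ x ∈ e, x ∈ s).card = 3 := by
  rw [SimpleGraph.mem_cliqueFinset_iff, SimpleGraph.is3Clique_iff] at hs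
  obtain ⟨a, b, c, hab, hac, hbc, rfl⟩ := hs
  have hset : (G.edgeFinset.filter fun e => ∀ x ∈ e, x ∈ ({a, b, c} : Finset V))
      = ({s(a, b), s(a, c), s(b, c)} : Finset (Sym2 V)) := by
    ext e
    induction e using Sym2.ind with
    | _ x y =>
      simp only [mem_filter, SimpleGraph.mem_edgeFinset, SimpleGraph.mem_edgeSet,
        Sym2.mem_iff, mem_insert, mem_singleton, Sym2.eq, Sym2.rel_iff', Prod.mk.injEq,
        Prod.swap_prod_mk]
      constructor
      · rintro ⟨hadj, hxy⟩
        have hx := hxy x (Or.inl rfl)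
        have hy := hxy y (Or.inr rfl)
        rcases hx with rfl | rfl | rfl <;> rcases hy with rfl | rfl | rfl <;>
          first
          | exact absurd rfl hadj.ne
          | tauto
      · rintro ((⟨rfl, rfl⟩ | ⟨rfl, rfl⟩) | (⟨rfl, rfl⟩ | ⟨rfl, rfl⟩) | (⟨rfl, rfl⟩ | ⟨rfl, rfl⟩)) <;> exact ⟨by first | exact hab | exact hac | exact hbc | exact hab.symm | exact hac.symm | exact hbc.symm, by intro x hx; tauto⟩
  rw [hset]
  rw [Finset.card_insert_of_notMem, Finset.card_insert_of_notMem, Finset.card_singleton]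
  · rw [Finset.mem_singleton, Sym2.eq_iff]
    rintro (⟨e1, -⟩ | ⟨-, e2⟩)
    · exact hab.ne e1
    · exact hbc.ne e2.symm
  · simp only [Finset.mem_insert, Finset.mem_singleton, Sym2.eq_iff]
    rintro ((⟨-, e⟩ | ⟨-, e2⟩) | (⟨e, -⟩ | ⟨e1, -⟩))
    · exact hbc.ne e
    · exact hab.ne e2.symm
    · exact hab.ne e
    · exact hac.ne e1

lemma tri_double (G : SimpleGraph V) :
    (∑ e ∈ G.edgeFinset, ((G.cliqueFinset 3).filter fun s => ∀ x ∈ e, x ∈ s).card)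
      = 3 * (G.cliqueFinset 3).card := by
  simp_rw [Finset.card_filter]
  rw [Finset.sum_comm]
  rw [Finset.sum_congr rfl fun s hs => ?_, Finset.sum_const, smul_eq_mul, mul_comm]
  rw [← Finset.card_filter]
  exact tri_edges_count G hs


lemma key_count (G : SimpleGraph V) (f : V → ι)
    (hf : ∀ u v : V, G.Adj u v ↔ f u ≠ f v) {u v : V} (h : G.Adj u v) :
    nCloser G u v + nCloser G v u + triEdge G u v = Fintype.card V := by
  have hne : f u ≠ f v := (hf u v).1 h
  have hA : nCloser G u v = (Finset.univ.filter fun w => f w = f v).card := nCloser_eq_s13 G f hf h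
  have hB : nCloser G v u = (Finset.univ.filter fun w => f w = f u).card :=
    nCloser_eq_s13 G f hf h.symm
  have hT : triEdge G u v = (Finset.univ.filter fun w => ¬f w = f u ∧ ¬f w = f v).card := by
    unfold triEdge
    congr 1
    apply Finset.filter_congr
    intro w _
    rw [hf u w, hf v w]
    exact ⟨fun ⟨a, b⟩ => ⟨Ne.symm a, Ne.symm b⟩, fun ⟨a, b⟩ => ⟨Ne.symm a, Ne.symm b⟩⟩
  have h1 := Finset.card_filter_add_card_filter_not
    (s := (Finset.univ : Finset V)) (p := fun w => f w = f u)
  have h2 := Finset.card_filter_add_card_filter_not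
    (s := Finset.univ.filter fun w => ¬f w = f u) (p := fun w => f w = f v)
  rw [Finset.filter_filter, Finset.filter_filter] at h2
  have e1 : (Finset.univ.filter fun w => ¬f w = f u ∧ f w = f v)
      = Finset.univ.filter fun w => f w = f v := by
    apply Finset.filter_congr
    intro w _
    exact ⟨fun ⟨_, b⟩ => b, fun b => ⟨fun a => hne (a ▸ b ▸ rfl), b⟩⟩
  rw [e1] at h2
  rw [Finset.card_univ] at h1
  rw [hA, hB, hT]
  omega

end Helpers

/-- For a complete multipartite graph `G` (adjacency = lying in different
parts) with `n` vertices and `m` edges, every edge `e = uv` satisfies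
`n_u(e) + n_v(e) = n - t(e)`, and consequently `PI_v(G) = n m - 3 t(G)`. -/
theorem stmt_13 {V : Type*} [Fintype V] {ι : Type*} (G : SimpleGraph V) (f : V → ι)
    (hf : ∀ u v : V, G.Adj u v ↔ f u ≠ f v) :
    (∀ u v : V, G.Adj u v →
        (nCloser G u v + nCloser G v u : ℤ) = Fintype.card V - triEdge G u v) ∧
      (PIv G : ℤ) = Fintype.card V * G.edgeFinset.card - 3 * triCount G := by
  constructor
  · intro u v h
    have := key_count G f hf h
    omega
  · have hnat : PIv G + 3 * triCount G = Fintype.card V * G.edgeFinset.card := by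
      unfold PIv triCount
      rw [← tri_double G, ← Finset.sum_add_distrib]
      rw [Finset.sum_congr rfl (fun e he => ?_), Finset.sum_const, smul_eq_mul, mul_comm]
      induction e using Sym2.ind with
      | _ u v =>
        rw [SimpleGraph.mem_edgeFinset, SimpleGraph.mem_edgeSet] at he
        rw [Sym2.lift_mk, ← edge_tri_count G he]
        exact key_count G f hf he
    have := hnat
    omega
end

section
/- Let G be a connected triangle-free simple graph with n ≥ 3 vertices. Then Sz(G) ≥ M_2(G), with equality if and only if G has diameter 2. -/
/-!
Distance-based topological indices (PI, vertex PI, Szeged, edge Szeged, Zagreb indices,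
triangle counts) for finite simple graphs, following Ilić, "Note on PI and Szeged indices".
-/

open scoped Classical
open Finset

open PaperDefs


namespace Stmt15Aux

open SimpleGraph

variable {V : Type*} [Fintype V] {G : SimpleGraph V}

lemma ediam_ne_top (hG : G.Connected) : G.ediam ≠ ⊤ := by
  have : Nonempty V := hG.nonempty
  obtain ⟨u, v, huv⟩ := G.exists_edist_eq_ediam_of_finite
  rw [← huv]
  exact edist_ne_top_iff_reachable.mpr (hG u v)

/-- The penultimate vertex of a shortest walk. -/
lemma exists_penult (hG : G.Connected) {x y : V} {n : ℕ} (h : G.dist x y = n + 1) :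
    ∃ u, G.Adj u y ∧ G.dist x u = n := by
  obtain ⟨p, hp⟩ := hG.exists_walk_length_eq_dist x y
  have hxy : x ≠ y := by
    rintro rfl
    simp [SimpleGraph.dist_self] at h
  obtain ⟨u, hadj, q, hq⟩ := Walk.exists_eq_cons_of_ne hxy.symm p.reverse
  have hlen : p.reverse.length = n + 1 := by
    rw [Walk.length_reverse, hp, h]
  rw [hq, Walk.length_cons] at hlen
  have hqlen : q.length = n := by omega
  refine ⟨u, hadj.symm, le_antisymm ?_ ?_⟩
  · calc G.dist x u ≤ q.reverse.length := dist_le q.reverse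
    _ = n := by rw [Walk.length_reverse, hqlen]
  · have h1 : G.dist u y ≤ 1 := by
      simpa using dist_le (Walk.cons hadj.symm Walk.nil)
    have h2 := hG.dist_triangle (u := x) (v := u) (w := y)
    omega

/-- In a triangle-free graph, `u` together with `N(u) \ {v}` is closer to `u` than to `v`. -/
lemma base_subset (hG : G.Connected) (htf : G.CliqueFree 3) {u v : V} (huv : G.Adj u v) :
    insert u (G.neighborFinset u \ {v}) ⊆
      Finset.univ.filter fun w => G.dist w u < G.dist w v := by
  intro w hw
  simp only [Finset.mem_insert, Finset.mem_sdiff, Finset.mem_singleton,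
    mem_neighborFinset] at hw
  simp only [Finset.mem_filter, Finset.mem_univ, true_and]
  rcases hw with rfl | ⟨hadj, hne⟩
  · rw [SimpleGraph.dist_self]
    exact hG.pos_dist_of_ne huv.ne
  · have h1 : G.dist w u = 1 := (dist_eq_one_iff_adj).mpr hadj.symm
    have hnadj : ¬ G.Adj w v := by
      intro hwv
      exact htf {u, v, w} (is3Clique_triple_iff.mpr ⟨huv, hadj, hwv.symm⟩)
    have h0 : G.dist w v ≠ 0 := fun h => hne (hG.dist_eq_zero_iff.mp h)
    have h1' : G.dist w v ≠ 1 := fun h => hnadj (dist_eq_one_iff_adj.mp h)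
    omega

lemma card_base {u v : V} (huv : G.Adj u v) :
    (insert u (G.neighborFinset u \ {v})).card = G.degree u := by
  have hu : u ∉ G.neighborFinset u \ {v} := by
    simp [mem_neighborFinset, G.irrefl]
  rw [Finset.card_insert_of_notMem hu, Finset.card_sdiff_of_subset (by simpa [mem_neighborFinset])]
  have : 1 ≤ G.degree u := by
    rw [← card_neighborFinset_eq_degree]
    exact Finset.card_pos.mpr ⟨v, by simpa [mem_neighborFinset]⟩
  rw [card_neighborFinset_eq_degree] at *
  simp only [Finset.card_singleton]
  omega

lemma deg_le_nCloser (hG : G.Connected) (htf : G.CliqueFree 3) {u v : V} (huv : G.Adj u v) :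
    G.degree u ≤ PaperDefs.nCloser G u v := by
  rw [PaperDefs.nCloser, ← card_base huv]
  exact Finset.card_le_card (base_subset hG htf huv)

lemma degree_pos (hG : G.Connected) (hn : 3 ≤ Fintype.card V) (u : V) :
    1 ≤ G.degree u := by
  have : Nontrivial V := Fintype.one_lt_card_iff_nontrivial.mp (by omega)
  obtain ⟨v, hv⟩ := exists_ne u
  obtain ⟨p⟩ := hG u v
  obtain ⟨w, hadj, q, -⟩ := Walk.exists_eq_cons_of_ne hv.symm p
  rw [← card_neighborFinset_eq_degree]
  exact Finset.card_pos.mpr ⟨w, by simpa [mem_neighborFinset]⟩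

/-- If the diameter is at most 2, `nCloser` is exactly the degree. -/
lemma nCloser_eq_degree (hG : G.Connected) (htf : G.CliqueFree 3)
    (hd : ∀ w v : V, G.dist w v ≤ 2) {u v : V} (huv : G.Adj u v) :
    PaperDefs.nCloser G u v = G.degree u := by
  rw [PaperDefs.nCloser, ← card_base huv]
  congr 1
  apply Finset.Subset.antisymm _ (base_subset hG htf huv)
  intro w hw
  simp only [Finset.mem_filter, Finset.mem_univ, true_and] at hw
  simp only [Finset.mem_insert, Finset.mem_sdiff, Finset.mem_singleton, mem_neighborFinset]
  have h2 := hd w v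
  have h1 : G.dist w u ≤ 1 := by omega
  rcases Nat.lt_or_ge (G.dist w u) 1 with h | h
  · left
    have : G.dist w u = 0 := by omega
    exact (hG.dist_eq_zero_iff.mp this)
  · right
    have h1' : G.dist w u = 1 := by omega
    refine ⟨(dist_eq_one_iff_adj.mp h1').symm, ?_⟩
    rintro rfl
    simp [SimpleGraph.dist_self] at hw

lemma termwise (hG : G.Connected) (htf : G.CliqueFree 3) :
    ∀ e ∈ G.edgeFinset,
      Sym2.lift ⟨fun u v => G.degree u * G.degree v, fun _ _ => mul_comm _ _⟩ e ≤
      Sym2.lift ⟨fun u v => PaperDefs.nCloser G u v * PaperDefs.nCloser G v u,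
        fun _ _ => mul_comm _ _⟩ e := by
  intro e he
  induction e with
  | _ u v =>
    rw [mem_edgeFinset, mem_edgeSet] at he
    simp only [Sym2.lift_mk]
    exact Nat.mul_le_mul (deg_le_nCloser hG htf he) (deg_le_nCloser hG htf he.symm)

end Stmt15Aux

/-- For a connected triangle-free graph `G` with `n ≥ 3` vertices,
`Sz(G) ≥ M₂(G)`, with equality iff `G` has diameter `2`. -/
theorem stmt_15 {V : Type*} [Fintype V] (G : SimpleGraph V) (hG : G.Connected)
    (hn : 3 ≤ Fintype.card V) (htf : G.CliqueFree 3) :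
    M2 G ≤ Sz G ∧ (Sz G = M2 G ↔ G.diam = 2) := by
  have hne : Nonempty V := hG.nonempty
  have hntop : G.ediam ≠ ⊤ := Stmt15Aux.ediam_ne_top hG
  have hM2 : M2 G ≤ Sz G := Finset.sum_le_sum (Stmt15Aux.termwise hG htf)
  -- the diameter is at least 2
  have hdiam2 : 2 ≤ G.diam := by
    obtain ⟨u⟩ := hne
    have hdeg := Stmt15Aux.degree_pos hG hn u
    rw [← SimpleGraph.card_neighborFinset_eq_degree] at hdeg
    obtain ⟨v, hv⟩ := Finset.card_pos.mp hdeg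
    rw [SimpleGraph.mem_neighborFinset] at hv
    have hcompl : (({u, v} : Finset V)ᶜ).Nonempty := by
      rw [← Finset.card_pos, Finset.card_compl]
      have h2 : ({u, v} : Finset V).card ≤ 2 := Finset.card_insert_le _ _ |>.trans (by simp)
      omega
    obtain ⟨w, hw⟩ := hcompl
    simp only [Finset.mem_compl, Finset.mem_insert, Finset.mem_singleton, not_or] at hw
    obtain ⟨hwu, hwv⟩ := hw
    have htri : ¬ (G.Adj u w ∧ G.Adj v w) := by
      rintro ⟨h1, h2⟩
      exact htf {u, v, w} (SimpleGraph.is3Clique_triple_iff.mpr ⟨hv, h1, h2⟩)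
    have key : ∃ a b : V, a ≠ b ∧ ¬ G.Adj a b := by
      by_cases h1 : G.Adj u w
      · exact ⟨v, w, fun h => hwv h.symm, fun h => htri ⟨h1, h⟩⟩
      · exact ⟨u, w, fun h => hwu h.symm, h1⟩
    obtain ⟨a, b, hab, hnadj⟩ := key
    have h0 : G.dist a b ≠ 0 := fun h => hab (hG.dist_eq_zero_iff.mp h)
    have h1 : G.dist a b ≠ 1 := fun h => hnadj (SimpleGraph.dist_eq_one_iff_adj.mp h)
    have := SimpleGraph.dist_le_diam hntop (u := a) (v := b)
    omega
  refine ⟨hM2, ?_, ?_⟩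
  · -- Sz = M2 → diam = 2
    intro heq
    by_contra hd
    have hd3 : 3 ≤ G.diam := by omega
    obtain ⟨x, y, hxy⟩ := SimpleGraph.exists_dist_eq_diam (G := G)
    obtain ⟨n, hn'⟩ : ∃ n, G.dist x y = n + 1 := ⟨G.diam - 1, by omega⟩
    have hn2 : 2 ≤ n := by omega
    obtain ⟨u, hadj, hdu⟩ := Stmt15Aux.exists_penult hG hn'
    -- x is closer to u than to y, but is not u nor a neighbor of u
    have hxS : x ∉ insert u (G.neighborFinset u \ {y}) := by
      simp only [Finset.mem_insert, Finset.mem_sdiff, Finset.mem_singleton,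
        SimpleGraph.mem_neighborFinset, not_or]
      constructor
      · rintro rfl; rw [SimpleGraph.dist_self] at hdu; omega
      · rintro ⟨h1, -⟩
        have : G.dist x u = 1 := SimpleGraph.dist_eq_one_iff_adj.mpr h1.symm
        omega
    have hsub : insert x (insert u (G.neighborFinset u \ {y})) ⊆
        Finset.univ.filter fun w => G.dist w u < G.dist w y := by
      intro w hw
      rcases Finset.mem_insert.mp hw with rfl | hw
      · simp only [Finset.mem_filter, Finset.mem_univ, true_and]
        omega
      · exact Stmt15Aux.base_subset hG htf hadj hw
    have hcard : G.degree u + 1 ≤ nCloser G u y := by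
      rw [nCloser]
      calc G.degree u + 1
          = (insert x (insert u (G.neighborFinset u \ {y}))).card := by
            rw [Finset.card_insert_of_notMem hxS, Stmt15Aux.card_base hadj]
        _ ≤ _ := Finset.card_le_card hsub
    have hstrict : Sym2.lift ⟨fun a b => G.degree a * G.degree b, fun _ _ => mul_comm _ _⟩
          (s(u, y)) <
        Sym2.lift ⟨fun a b => nCloser G a b * nCloser G b a, fun _ _ => mul_comm _ _⟩
          (s(u, y)) := by
      simp only [Sym2.lift_mk]
      have h1 : G.degree y ≤ nCloser G y u :=
        Stmt15Aux.deg_le_nCloser hG htf hadj.symm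
      have h2 : 1 ≤ G.degree y := Stmt15Aux.degree_pos hG hn y
      calc G.degree u * G.degree y < (G.degree u + 1) * G.degree y := by
            nlinarith
        _ ≤ nCloser G u y * nCloser G y u := Nat.mul_le_mul hcard h1
    have hlt : M2 G < Sz G := by
      apply Finset.sum_lt_sum (Stmt15Aux.termwise hG htf)
      exact ⟨s(u, y), by
        rw [SimpleGraph.mem_edgeFinset, SimpleGraph.mem_edgeSet]; exact hadj, hstrict⟩
    omega
  · -- diam = 2 → Sz = M2
    intro hd
    have hle : ∀ w v : V, G.dist w v ≤ 2 := fun w v => by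
      have := SimpleGraph.dist_le_diam hntop (u := w) (v := v)
      omega
    apply Finset.sum_congr rfl
    intro e he
    induction e with
    | _ u v =>
      rw [SimpleGraph.mem_edgeFinset, SimpleGraph.mem_edgeSet] at he
      simp only [Sym2.lift_mk]
      rw [Stmt15Aux.nCloser_eq_degree hG htf hle he,
        Stmt15Aux.nCloser_eq_degree hG htf hle he.symm]
end

section
/- (Pólya–Szegő inequality) Let a_1, …, a_n and b_1, …, b_n be positive real numbers such that a ≤ a_i ≤ A and b ≤ b_i ≤ B for all 1 ≤ i ≤ n, where 0 < a ≤ A and 0 < b ≤ B. Then (Σ_{i=1}^n a_i²)·(Σ_{i=1}^n b_i²) ≤ (1/4)·(√(AB/(ab)) + √(ab/(AB)))²·(Σ_{i=1}^n a_i b_i)². -/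
/-!
Distance-based topological indices (PI, vertex PI, Szeged, edge Szeged, Zagreb indices,
triangle counts) for finite simple graphs, following Ilić, "Note on PI and Szeged indices".
-/

open scoped Classical
open Finset

open PaperDefs

set_option maxHeartbeats 1000000 in
/-- **Pólya–Szegő inequality.** If `0 < a ≤ xᵢ ≤ A` and `0 < b ≤ yᵢ ≤ B`
for all `i`, then
`(Σ xᵢ²)(Σ yᵢ²) ≤ (1/4)(√(AB/(ab)) + √(ab/(AB)))² (Σ xᵢ yᵢ)²`. -/
theorem stmt_17 (n : ℕ) (x y : Fin n → ℝ) (a A b B : ℝ)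
    (ha : 0 < a) (haA : a ≤ A) (hb : 0 < b) (hbB : b ≤ B)
    (hx : ∀ i, a ≤ x i ∧ x i ≤ A) (hy : ∀ i, b ≤ y i ∧ y i ≤ B) :
    (∑ i, x i ^ 2) * (∑ i, y i ^ 2) ≤
      (1 / 4) * (Real.sqrt (A * B / (a * b)) + Real.sqrt (a * b / (A * B))) ^ 2 *
        (∑ i, x i * y i) ^ 2 := by

  have hA : 0 < A := lt_of_lt_of_le ha haA
  have hB : 0 < B := lt_of_lt_of_le hb hbB
  set Sx := ∑ i, x i ^ 2 with hSxdef
  set Sy := ∑ i, y i ^ 2 with hSydef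
  set S := ∑ i, x i * y i with hSdef
  have hSx : 0 ≤ Sx := Finset.sum_nonneg fun i _ => sq_nonneg _
  have hSy : 0 ≤ Sy := Finset.sum_nonneg fun i _ => sq_nonneg _
  have hS : 0 ≤ S := Finset.sum_nonneg fun i _ =>
    mul_nonneg (le_trans ha.le (hx i).1) (le_trans hb.le (hy i).1)
  have key : b*B*Sx + a*A*Sy ≤ (A*B + a*b) * S := by
    have h1 : ∀ i ∈ Finset.univ (α := Fin n),
        b*B*(x i)^2 + a*A*(y i)^2 ≤ (A*B + a*b) * (x i * y i) := by
      intro i _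
      obtain ⟨h1, h2⟩ := hx i
      obtain ⟨h3, h4⟩ := hy i
      have e1 : 0 ≤ B * x i - a * y i := by nlinarith
      have e2 : 0 ≤ A * y i - b * x i := by nlinarith
      nlinarith [mul_nonneg e1 e2]
    calc b*B*Sx + a*A*Sy = ∑ i, (b*B*(x i)^2 + a*A*(y i)^2) := by
          simp [hSxdef, hSydef, Finset.mul_sum, Finset.sum_add_distrib]
      _ ≤ ∑ i, (A*B + a*b) * (x i * y i) := Finset.sum_le_sum h1
      _ = (A*B + a*b) * S := by rw [hSdef, Finset.mul_sum]
  set u := b*B*Sx with hu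
  set v := a*A*Sy with hv
  have hu0 : 0 ≤ u := by positivity
  have hv0 : 0 ≤ v := by positivity
  have hsu := Real.sq_sqrt hu0
  have hsv := Real.sq_sqrt hv0
  have amgm : 2 * (Real.sqrt u * Real.sqrt v) ≤ u + v := by
    nlinarith [sq_nonneg (Real.sqrt u - Real.sqrt v)]
  have huv : 4 * (u * v) ≤ ((A*B + a*b) * S)^2 := by
    have h2 : 2 * (Real.sqrt u * Real.sqrt v) ≤ (A*B + a*b) * S := le_trans amgm key
    nlinarith [mul_self_le_mul_self (show (0:ℝ) ≤ 2*(Real.sqrt u * Real.sqrt v) by positivity) h2,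
      hsu, hsv]
  -- coefficient identity
  have hp : (0:ℝ) < A*B := by positivity
  have hq : (0:ℝ) < a*b := by positivity
  have hst : Real.sqrt (A*B/(a*b)) * Real.sqrt (a*b/(A*B)) = 1 := by
    rw [← Real.sqrt_mul (by positivity)]
    rw [show A*B/(a*b) * (a*b/(A*B)) = 1 by field_simp]
    exact Real.sqrt_one
  have hs1 : Real.sqrt (A*B/(a*b)) ^ 2 = A*B/(a*b) := Real.sq_sqrt (by positivity)
  have hs2 : Real.sqrt (a*b/(A*B)) ^ 2 = a*b/(A*B) := Real.sq_sqrt (by positivity)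
  have hcoef : (1/4) * (Real.sqrt (A*B/(a*b)) + Real.sqrt (a*b/(A*B)))^2
      = (A*B + a*b)^2 / (4 * (A*B) * (a*b)) := by
    have expand : (Real.sqrt (A*B/(a*b)) + Real.sqrt (a*b/(A*B)))^2
        = A*B/(a*b) + 2 + a*b/(A*B) := by
      rw [add_sq, hs1, hs2, mul_assoc, hst]; ring
    rw [expand]; field_simp; ring
  rw [hcoef]
  rw [div_mul_eq_mul_div, le_div_iff₀ (by positivity)]
  rw [hu, hv] at huv
  nlinarith [huv]
end

section
/- Let G be a simple graph with n vertices and m edges. Then 32·m·n·Sz(G) ≤ (n + 2)²·PI_v(G)², with equality if and only if m = 0 or n = 2. -/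
/-!
Distance-based topological indices (PI, vertex PI, Szeged, edge Szeged, Zagreb indices,
triangle counts) for finite simple graphs, following Ilić, "Note on PI and Szeged indices".
-/

open scoped Classical
open Finset

open PaperDefs

namespace Aux18
variable {V : Type*} [Fintype V] {G : SimpleGraph V}

lemma one_le_nCloser {u v : V} (h : G.Adj u v) : 1 ≤ nCloser G u v := by
  rw [nCloser]
  refine Finset.card_pos.2 ⟨u, ?_⟩
  simp [SimpleGraph.dist_self, SimpleGraph.dist_eq_one_iff_adj.2 h]

lemma nCloser_add_le {u v : V} : nCloser G u v + nCloser G v u ≤ Fintype.card V := by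
  rw [nCloser, nCloser]
  rw [← Finset.card_union_of_disjoint]
  · exact Finset.card_le_univ _
  · rw [Finset.disjoint_filter]
    intro w _ h1 h2
    omega

lemma dist_ne_of_sum_eq {u v : V}
    (hs : nCloser G u v + nCloser G v u = Fintype.card V) (w : V) :
    G.dist w u ≠ G.dist w v := by
  rw [nCloser, nCloser] at hs
  rw [← Finset.card_union_of_disjoint
    (by rw [Finset.disjoint_filter]; intro w _ h1 h2; omega)] at hs
  have huniv := Finset.eq_univ_of_card _ hs
  have hw : w ∈ _ := huniv ▸ Finset.mem_univ w
  simp only [Finset.mem_union, Finset.mem_filter, Finset.mem_univ, true_and] at hw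
  omega

lemma dist_eq_of_sum_eq_two {u v : V} (h : G.Adj u v)
    (hs : nCloser G u v + nCloser G v u = 2) (w : V) (hwu : w ≠ u) (hwv : w ≠ v) :
    G.dist w u = G.dist w v := by
  have h1 : nCloser G u v = 1 ∧ nCloser G v u = 1 := by
    have := one_le_nCloser h
    have := one_le_nCloser h.symm
    omega
  have hu : (Finset.univ.filter fun w => G.dist w u < G.dist w v) = {u} := by
    obtain ⟨a, ha⟩ := Finset.card_eq_one.mp h1.1
    have : u ∈ (Finset.univ.filter fun w => G.dist w u < G.dist w v) := by
      simp [SimpleGraph.dist_self, SimpleGraph.dist_eq_one_iff_adj.2 h]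
    rw [ha] at this ⊢
    simp at this
    rw [this]
  have hv : (Finset.univ.filter fun w => G.dist w v < G.dist w u) = {v} := by
    obtain ⟨a, ha⟩ := Finset.card_eq_one.mp h1.2
    have : v ∈ (Finset.univ.filter fun w => G.dist w v < G.dist w u) := by
      simp [SimpleGraph.dist_self, SimpleGraph.dist_eq_one_iff_adj.2 h.symm]
    rw [ha] at this ⊢
    simp at this
    rw [this]
  have h2 : w ∉ (Finset.univ.filter fun w => G.dist w u < G.dist w v) := by
    rw [hu]; simp [hwu]
  have h3 : w ∉ (Finset.univ.filter fun w => G.dist w v < G.dist w u) := by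
    rw [hv]; simp [hwv]
  simp only [Finset.mem_filter, Finset.mem_univ, true_and, not_lt] at h2 h3
  omega

lemma ext_n (hn3 : 3 ≤ Fintype.card V)
    (hall : ∀ a b : V, G.Adj a b → nCloser G a b + nCloser G b a = 2 ∨
      nCloser G a b + nCloser G b a = Fintype.card V)
    {a b c : V} (hab : G.Adj a b)
    (hsn : nCloser G a b + nCloser G b a = Fintype.card V)
    (hac : G.Adj a c) : nCloser G a c + nCloser G c a = Fintype.card V := by
  rcases hall a c hac with h2 | hn
  · exfalso
    by_cases hcb : c = b
    · subst hcb; omega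
    · have hba : G.dist b a = G.dist b c :=
        dist_eq_of_sum_eq_two hac h2 b hab.ne' (Ne.symm hcb)
      have hba1 : G.dist b a = 1 := SimpleGraph.dist_eq_one_iff_adj.2 hab.symm
      have hca : G.dist c a = 1 := SimpleGraph.dist_eq_one_iff_adj.2 hac.symm
      have hcb1 : G.dist c b = 1 := by rw [SimpleGraph.dist_comm]; omega
      exact dist_ne_of_sum_eq hsn c (by omega)
  · exact hn

lemma reach_of_sum_eq {u v : V} (huv : G.Adj u v)
    (hs : nCloser G u v + nCloser G v u = Fintype.card V) (w : V) :
    G.Reachable u w := by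
  by_contra hr
  have h1 : G.dist w u = 0 :=
    SimpleGraph.dist_eq_zero_of_not_reachable (fun h => hr h.symm)
  have h2 : G.dist w v = 0 := by
    refine SimpleGraph.dist_eq_zero_of_not_reachable (fun h => hr ?_)
    exact (h.trans huv.symm.reachable).symm
  exact dist_ne_of_sum_eq hs w (by omega)

lemma prop_walk (hn3 : 3 ≤ Fintype.card V)
    (hall : ∀ a b : V, G.Adj a b → nCloser G a b + nCloser G b a = 2 ∨
      nCloser G a b + nCloser G b a = Fintype.card V)
    {a w : V} (p : G.Walk a w)
    (ha : ∃ b, G.Adj a b ∧ nCloser G a b + nCloser G b a = Fintype.card V) :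
    ∀ c, G.Adj w c → nCloser G w c + nCloser G c w = Fintype.card V := by
  induction p with
  | nil =>
    intro c hc
    obtain ⟨b, hb, hsb⟩ := ha
    exact ext_n hn3 hall hb hsb hc
  | @cons a z w h p ih =>
    refine ih ?_
    obtain ⟨b, hb, hsb⟩ := ha
    have hz : nCloser G a z + nCloser G z a = Fintype.card V :=
      ext_n hn3 hall hb hsb h
    exact ⟨a, h.symm, by omega⟩

lemma no_mixed (hn3 : 3 ≤ Fintype.card V)
    (hall : ∀ a b : V, G.Adj a b → nCloser G a b + nCloser G b a = 2 ∨
      nCloser G a b + nCloser G b a = Fintype.card V)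
    {u v x y : V} (huv : G.Adj u v)
    (hsn : nCloser G u v + nCloser G v u = Fintype.card V)
    (hxy : G.Adj x y)
    (hs2 : nCloser G x y + nCloser G y x = 2) : False := by
  obtain ⟨p⟩ := reach_of_sum_eq huv hsn x
  have := prop_walk hn3 hall p ⟨v, huv, hsn⟩ y hxy
  omega

end Aux18

open Aux18

set_option maxHeartbeats 2000000 in
/-- For a simple graph `G` with `n` vertices and `m` edges,
`32 m n Sz(G) ≤ (n + 2)² PI_v(G)²`, with equality iff `m = 0` or `n = 2`. -/
theorem stmt_18 {V : Type*} [Fintype V] (G : SimpleGraph V) :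
    32 * G.edgeFinset.card * Fintype.card V * Sz G ≤
        (Fintype.card V + 2) ^ 2 * PIv G ^ 2 ∧
      (32 * G.edgeFinset.card * Fintype.card V * Sz G =
          (Fintype.card V + 2) ^ 2 * PIv G ^ 2 ↔
        G.edgeFinset.card = 0 ∨ Fintype.card V = 2) := by
  obtain ⟨n, hn⟩ : ∃ k, k = Fintype.card V := ⟨_, rfl⟩
  obtain ⟨m, hm⟩ : ∃ k, k = G.edgeFinset.card := ⟨_, rfl⟩
  obtain ⟨S, hS⟩ : ∃ k, k = Sz G := ⟨_, rfl⟩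
  obtain ⟨P, hP⟩ : ∃ k, k = PIv G := ⟨_, rfl⟩
  rw [← hn, ← hm, ← hS, ← hP]
  -- per-edge inequality
  have key1 : ∀ e ∈ G.edgeFinset,
      4 * Sym2.lift ⟨fun u v => nCloser G u v * nCloser G v u, fun _ _ => mul_comm _ _⟩ e
        + 2 * n ≤
      (n + 2) * Sym2.lift ⟨fun u v => nCloser G u v + nCloser G v u, fun _ _ => add_comm _ _⟩ e := by
    intro e he
    induction e using Sym2.ind with
    | _ u v =>
      simp only [Sym2.lift_mk]
      have hadj : G.Adj u v := by
        rw [SimpleGraph.mem_edgeFinset, SimpleGraph.mem_edgeSet] at he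
        exact he
      have h1 := one_le_nCloser hadj
      have h2 := one_le_nCloser hadj.symm
      have h3 := nCloser_add_le (G := G) (u := u) (v := v)
      rw [← hn] at h3
      obtain ⟨p, hp⟩ : ∃ k, k = nCloser G u v := ⟨_, rfl⟩
      obtain ⟨q, hq⟩ : ∃ k, k = nCloser G v u := ⟨_, rfl⟩
      rw [← hp] at h1 h3 ⊢
      rw [← hq] at h2 h3 ⊢
      have hZ : (4:ℤ) * (p * q) + 2 * n ≤ (n + 2) * (p + q) := by
        have c1 : (1:ℤ) ≤ p := by exact_mod_cast h1
        have c2 : (1:ℤ) ≤ q := by exact_mod_cast h2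
        have c3 : (p:ℤ) + q ≤ n := by exact_mod_cast h3
        nlinarith [sq_nonneg ((p:ℤ) - q), mul_nonneg (by linarith : (0:ℤ) ≤ (p:ℤ) + q - 2)
          (by linarith : (0:ℤ) ≤ (n:ℤ) - (p + q))]
      exact_mod_cast hZ
  have e1 : 4 * S + 2 * n * m =
      ∑ e ∈ G.edgeFinset,
        (4 * Sym2.lift ⟨fun u v => nCloser G u v * nCloser G v u, fun _ _ => mul_comm _ _⟩ e
          + 2 * n) := by
    rw [Finset.sum_add_distrib, Finset.sum_const, ← Finset.mul_sum, smul_eq_mul, hS, Sz, ← hm]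
    ring
  have e2 : (n + 2) * P =
      ∑ e ∈ G.edgeFinset,
        (n + 2) * Sym2.lift ⟨fun u v => nCloser G u v + nCloser G v u, fun _ _ => add_comm _ _⟩ e := by
    rw [hP, PIv, Finset.mul_sum]
  have hsum : 4 * S + 2 * n * m ≤ (n + 2) * P := by
    rw [e1, e2]
    exact Finset.sum_le_sum key1
  have hineq : 32 * m * n * S ≤ (n + 2) ^ 2 * P ^ 2 := by
    calc 32 * m * n * S = 4 * (4 * S) * (2 * n * m) := by ring
      _ ≤ (4 * S + 2 * n * m) ^ 2 := by
          nlinarith [two_mul_le_add_sq (4 * S) (2 * n * m)]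
      _ ≤ ((n + 2) * P) ^ 2 := Nat.pow_le_pow_left hsum 2
      _ = (n + 2) ^ 2 * P ^ 2 := by ring
  refine ⟨hineq, ?_, ?_⟩
  · -- equality → m = 0 ∨ n = 2
    intro heq
    by_contra hcon
    push_neg at hcon
    obtain ⟨hm0, hn2⟩ := hcon
    -- there is an edge, so n ≥ 2, hence n ≥ 3
    have hmpos : 0 < G.edgeFinset.card := by omega
    obtain ⟨e0, he0⟩ := Finset.card_pos.mp hmpos
    have hn2' : 2 ≤ n := by
      rw [hn]
      induction e0 using Sym2.ind with
      | _ u v =>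
        have hadj : G.Adj u v := by
          rw [SimpleGraph.mem_edgeFinset, SimpleGraph.mem_edgeSet] at he0
          exact he0
        have : Nontrivial V := ⟨u, v, hadj.ne⟩
        exact Fintype.one_lt_card
    have hn3 : 3 ≤ n := by omega
    have hE : 4 * (4 * S) * (2 * n * m) = ((n + 2) * P) ^ 2 := by
      calc 4 * (4 * S) * (2 * n * m) = 32 * m * n * S := by ring
        _ = (n + 2) ^ 2 * P ^ 2 := heq
        _ = ((n + 2) * P) ^ 2 := by ring
    have h4ab : 4 * (4 * S) * (2 * n * m) ≤ (4 * S + 2 * n * m) ^ 2 := by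
      nlinarith [two_mul_le_add_sq (4 * S) (2 * n * m)]
    have hsq : (4 * S + 2 * n * m) ^ 2 ≤ ((n + 2) * P) ^ 2 := Nat.pow_le_pow_left hsum 2
    have hceq : 4 * S + 2 * n * m = (n + 2) * P := by
      by_contra hne
      have hlt : 4 * S + 2 * n * m < (n + 2) * P := lt_of_le_of_ne hsum hne
      have : (4 * S + 2 * n * m) ^ 2 < ((n + 2) * P) ^ 2 :=
        Nat.pow_lt_pow_left hlt two_ne_zero
      omega
    have hab : 4 * S = 2 * n * m := by
      have h0 : 4 * (4 * S) * (2 * n * m) = (4 * S + 2 * n * m) ^ 2 := by omega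
      have hZ : ((4 * S : ℕ) : ℤ) = ((2 * n * m : ℕ) : ℤ) := by
        have hc : (4:ℤ) * ((4 * S : ℕ) : ℤ) * ((2 * n * m : ℕ) : ℤ) =
            (((4 * S : ℕ) : ℤ) + ((2 * n * m : ℕ) : ℤ)) ^ 2 := by exact_mod_cast h0
        nlinarith [sq_nonneg (((4 * S : ℕ) : ℤ) - ((2 * n * m : ℕ) : ℤ))]
      exact_mod_cast hZ
    -- per-edge equalities
    have hsumeq : ∑ e ∈ G.edgeFinset,
        (4 * Sym2.lift ⟨fun u v => nCloser G u v * nCloser G v u, fun _ _ => mul_comm _ _⟩ e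
          + 2 * n) =
        ∑ e ∈ G.edgeFinset,
          (n + 2) * Sym2.lift ⟨fun u v => nCloser G u v + nCloser G v u, fun _ _ => add_comm _ _⟩ e := by
      rw [← e1, ← e2, hceq]
    have hpe := (Finset.sum_eq_sum_iff_of_le key1).mp hsumeq
    have hpair : ∀ u v : V, G.Adj u v →
        4 * (nCloser G u v * nCloser G v u) + 2 * n =
          (n + 2) * (nCloser G u v + nCloser G v u) := by
      intro u v hadj
      have he : s(u, v) ∈ G.edgeFinset := by
        rw [SimpleGraph.mem_edgeFinset, SimpleGraph.mem_edgeSet]; exact hadj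
      have h' := hpe _ he
      simp only [Sym2.lift_mk] at h'
      exact h'
    have hall : ∀ u v : V, G.Adj u v → nCloser G u v + nCloser G v u = 2 ∨
        nCloser G u v + nCloser G v u = n := by
      intro u v hadj
      have h1 := one_le_nCloser hadj
      have h2 := one_le_nCloser hadj.symm
      have h3 := nCloser_add_le (G := G) (u := u) (v := v)
      rw [← hn] at h3
      have heq' := hpair u v hadj
      obtain ⟨p, hp⟩ : ∃ k, k = nCloser G u v := ⟨_, rfl⟩
      obtain ⟨q, hq⟩ : ∃ k, k = nCloser G v u := ⟨_, rfl⟩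
      rw [← hp] at h1 h3 heq' ⊢
      rw [← hq] at h2 h3 heq' ⊢
      have hZ : ((p:ℤ) + q - 2) * ((p:ℤ) + q - n) = 0 := by
        have c1 : (1:ℤ) ≤ p := by exact_mod_cast h1
        have c2 : (1:ℤ) ≤ q := by exact_mod_cast h2
        have c3 : (p:ℤ) + q ≤ n := by exact_mod_cast h3
        have c4 : (4:ℤ) * (p * q) + 2 * n = (n + 2) * (p + q) := by exact_mod_cast heq'
        have hle : ((p:ℤ) + q - 2) * ((p:ℤ) + q - n) ≤ 0 :=
          mul_nonpos_of_nonneg_of_nonpos (by linarith) (by linarith)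
        have hge : 0 ≤ ((p:ℤ) + q - 2) * ((p:ℤ) + q - n) := by
          nlinarith [sq_nonneg ((p:ℤ) - q)]
        omega
      rcases mul_eq_zero.mp hZ with h | h
      · left
        have : (p:ℤ) + q = 2 := by linarith
        exact_mod_cast this
      · right
        have : (p:ℤ) + q = n := by linarith
        exact_mod_cast this
    have hm1 : 1 ≤ m := by omega
    have hexn : ∃ u v : V, G.Adj u v ∧ nCloser G u v + nCloser G v u = n := by
      by_contra hno
      push_neg at hno
      have hSz : S = m := by
        rw [hS, hm, Sz, Finset.card_eq_sum_ones]
        refine Finset.sum_congr rfl ?_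
        intro e he
        induction e using Sym2.ind with
        | _ u v =>
          simp only [Sym2.lift_mk]
          have hadj : G.Adj u v := by
            rw [SimpleGraph.mem_edgeFinset, SimpleGraph.mem_edgeSet] at he; exact he
          have hs2 : nCloser G u v + nCloser G v u = 2 := by
            rcases hall u v hadj with h | h
            · exact h
            · exact absurd h (hno u v hadj)
          have h1 := one_le_nCloser hadj
          have h2 := one_le_nCloser hadj.symm
          have : nCloser G u v = 1 ∧ nCloser G v u = 1 := by omega
          rw [this.1, this.2]
      rw [hSz] at hab
      nlinarith
    have hex2 : ∃ x y : V, G.Adj x y ∧ nCloser G x y + nCloser G y x = 2 := by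
      by_contra hno
      push_neg at hno
      have hSz : 4 * S = n ^ 2 * m := by
        rw [hS, hm, Sz, Finset.mul_sum, Finset.card_eq_sum_ones, Finset.mul_sum]
        refine Finset.sum_congr rfl ?_
        intro e he
        induction e using Sym2.ind with
        | _ u v =>
          simp only [Sym2.lift_mk]
          have hadj : G.Adj u v := by
            rw [SimpleGraph.mem_edgeFinset, SimpleGraph.mem_edgeSet] at he; exact he
          have hsn : nCloser G u v + nCloser G v u = n := by
            rcases hall u v hadj with h | h
            · exact absurd h (hno u v hadj)
            · exact h
          have heq' := hpair u v hadj
          rw [hsn] at heq'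
          obtain ⟨p, hp⟩ : ∃ k, k = nCloser G u v * nCloser G v u := ⟨_, rfl⟩
          rw [← hp] at heq' ⊢
          have : 4 * p = n ^ 2 := by nlinarith
          rw [this]; ring
      have h9 : n ^ 2 * m = 2 * n * m := hSz.symm.trans hab
      nlinarith
    obtain ⟨u, v, huv, hsn⟩ := hexn
    obtain ⟨x, y, hxy, hs2⟩ := hex2
    rw [hn] at hn3 hsn hall
    exact no_mixed hn3 hall huv hsn hxy hs2
  · -- m = 0 ∨ n = 2 → equality
    rintro (h | h)
    · have hE : G.edgeFinset = ∅ := Finset.card_eq_zero.mp (hm ▸ h)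
      have hSz : S = 0 := by rw [hS, Sz, hE, Finset.sum_empty]
      have hPIv : P = 0 := by rw [hP, PIv, hE, Finset.sum_empty]
      rw [h, hSz, hPIv]
      ring
    · -- n = 2 : each edge has p = q = 1
      have hpe2 : ∀ e ∈ G.edgeFinset,
          Sym2.lift ⟨fun u v => nCloser G u v * nCloser G v u, fun _ _ => mul_comm _ _⟩ e = 1 ∧
          Sym2.lift ⟨fun u v => nCloser G u v + nCloser G v u, fun _ _ => add_comm _ _⟩ e = 2 := by
        intro e he
        induction e using Sym2.ind with
        | _ u v =>
          simp only [Sym2.lift_mk]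
          have hadj : G.Adj u v := by
            rw [SimpleGraph.mem_edgeFinset, SimpleGraph.mem_edgeSet] at he; exact he
          have h1 := one_le_nCloser hadj
          have h2 := one_le_nCloser hadj.symm
          have h3 := nCloser_add_le (G := G) (u := u) (v := v)
          rw [← hn, h] at h3
          have : nCloser G u v = 1 ∧ nCloser G v u = 1 := by omega
          rw [this.1, this.2]
          exact ⟨rfl, rfl⟩
      have hSz : S = m := by
        rw [hS, hm, Sz, Finset.card_eq_sum_ones]
        exact Finset.sum_congr rfl fun e he => (hpe2 e he).1
      have hPIv : P = 2 * m := by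
        rw [hP, hm, PIv, Finset.card_eq_sum_ones, Finset.mul_sum]
        exact Finset.sum_congr rfl fun e he => by rw [(hpe2 e he).2]; ring
      rw [hSz, hPIv, h]
      ring
end

section
/- Let G be a connected bipartite simple graph with n vertices and m edges. Then PI_v(G) = n·m. -/
/-!
Distance-based topological indices (PI, vertex PI, Szeged, edge Szeged, Zagreb indices,
triangle counts) for finite simple graphs, following Ilić, "Note on PI and Szeged indices".
-/

open scoped Classical
open Finset

open PaperDefs

lemma walk_parity {V : Type*} {G : SimpleGraph V} (C : G.Coloring (Fin 2)) {a b : V}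
    (p : G.Walk a b) : (C a = C b) ↔ Even p.length := by
  induction p with
  | nil => simp
  | @cons a c b h q ih =>
    have hne : C a ≠ C c := C.valid h
    have key : ∀ x y z : Fin 2, x ≠ y → ((x = z) ↔ ¬ (y = z)) := by decide
    simp only [SimpleGraph.Walk.length_cons, Nat.even_add_one, ← ih]
    exact key _ _ _ hne

lemma dist_parity {V : Type*} {G : SimpleGraph V} (hG : G.Connected)
    (C : G.Coloring (Fin 2)) (a b : V) : (C a = C b) ↔ Even (G.dist a b) := by
  obtain ⟨p, hp⟩ := hG.exists_walk_length_eq_dist a b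
  rw [← hp]
  exact walk_parity C p

/-- For a connected bipartite graph `G` with `n` vertices and `m` edges,
`PI_v(G) = n m`. -/
theorem stmt_19 {V : Type*} [Fintype V] (G : SimpleGraph V) (hG : G.Connected)
    (hbip : G.Colorable 2) :
    PIv G = Fintype.card V * G.edgeFinset.card := by
  obtain ⟨C⟩ := hbip
  have key : ∀ u v : V, G.Adj u v → ∀ w : V, G.dist w u ≠ G.dist w v := by
    intro u v huv w h
    have h1 := dist_parity hG C w u
    have h2 := dist_parity hG C w v
    rw [h] at h1
    have hcw := h1.trans h2.symm
    have hd : ∀ x y z : Fin 2, ((z = x) ↔ (z = y)) → x ≠ y → False := by decide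
    exact hd _ _ _ hcw (C.valid huv)
  have hterm : ∀ u v : V, G.Adj u v → nCloser G u v + nCloser G v u = Fintype.card V := by
    intro u v huv
    unfold nCloser
    have heq : Finset.univ.filter (fun w => G.dist w v < G.dist w u)
        = Finset.univ.filter (fun w => ¬ G.dist w u < G.dist w v) :=
      Finset.filter_congr (fun w _ => by have := key u v huv w; omega)
    rw [heq, Finset.card_filter_add_card_filter_not, Finset.card_univ]
  unfold PIv
  rw [Finset.sum_congr rfl (fun e he => ?_), Finset.sum_const, smul_eq_mul, mul_comm]
  induction e with
  | h u v =>
    rw [SimpleGraph.mem_edgeFinset, SimpleGraph.mem_edgeSet] at he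
    simpa using hterm u v he
end
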